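/- arXiv:0707.3950 — 7 statements merged into one kernel-verified Lean document; each statement's English description precedes it below -/
import Mathlib

section
/- For every positive integer n ≥ 1 there exists a number c_n with 0 < c_n < 1 such that H_n = (1/2)·ln(2m) + γ + c_n/(12m), where m := n(n+1)/2. -/
open Real Filter Topology

lemma log_ineq_lower {x : ℝ} (hx : 0 < x) (hx1 : x < 1) :
    2 * x < Real.log (1 + x) - Real.log (1 - x) := by
  set f : ℝ → ℝ := fun y => Real.log (1 + y) - Real.log (1 - y) - 2 * y with hf
  have key : StrictMonoOn f (Set.Ico 0 1) := by
    apply strictMonoOn_of_deriv_pos (convex_Ico 0 1)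
    · apply ContinuousOn.sub
      apply ContinuousOn.sub
      · exact (continuous_const.add continuous_id).continuousOn.log
          (fun y hy => by simp only [Set.mem_Ico] at hy; try simp only [id_eq]
                          exact (by linarith [hy.1] : (0:ℝ) < 1 + y).ne')
      · exact (continuous_const.sub continuous_id).continuousOn.log
          (fun y hy => by simp only [Set.mem_Ico] at hy; try simp only [id_eq]
                          exact (by linarith [hy.2] : (0:ℝ) < 1 - y).ne')
      · exact (continuous_const.mul continuous_id).continuousOn
    · intro y hy
      rw [interior_Ico, Set.mem_Ioo] at hy
      have h1 : (0:ℝ) < 1 + y := by linarith [hy.1]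
      have h2 : (0:ℝ) < 1 - y := by linarith [hy.2]
      have d1 : HasDerivAt (fun z : ℝ => Real.log (1 + z)) (1/(1+y)) y := by
        have := (Real.hasDerivAt_log h1.ne').comp y ((hasDerivAt_id y).const_add 1)
        simpa [Function.comp_def] using this
      have d2 : HasDerivAt (fun z : ℝ => Real.log (1 - z)) (-(1/(1-y))) y := by
        have := (Real.hasDerivAt_log h2.ne').comp y ((hasDerivAt_id y).neg.const_add 1)
        simpa [neg_div, Function.comp_def] using this
      have d3 : HasDerivAt f (2*y^2 / ((1+y)*(1-y))) y := by
        have h := (d1.sub d2).sub ((hasDerivAt_id y).const_mul 2)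
        convert h using 1 <;> try rfl
        field_simp; ring
      rw [d3.deriv]
      exact div_pos (mul_pos two_pos (pow_pos hy.1 2)) (mul_pos h1 h2)
  have h0 : f 0 = 0 := by simp [hf]
  have := key (Set.mem_Ico.mpr ⟨le_refl 0, one_pos⟩) (Set.mem_Ico.mpr ⟨hx.le, hx1⟩) hx
  rw [h0] at this
  simp only [hf] at this
  linarith

lemma log_ineq_upper {x : ℝ} (hx : 0 < x) (hx1 : x < 1) :
    Real.log (1 + x) - Real.log (1 - x) < 2 * x + (2/3) * x^3 / (1 - x^2) := by
  set g : ℝ → ℝ := fun y => 2 * y + (2/3) * y^3 / (1 - y^2) - (Real.log (1 + y) - Real.log (1 - y)) with hg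
  have key : StrictMonoOn g (Set.Ico 0 1) := by
    apply strictMonoOn_of_deriv_pos (convex_Ico 0 1)
    · apply ContinuousOn.sub
      apply ContinuousOn.add
      · exact (continuous_const.mul continuous_id).continuousOn
      · apply ContinuousOn.div
        · exact (continuous_const.mul (continuous_pow 3)).continuousOn
        · exact (continuous_const.sub (continuous_pow 2)).continuousOn
        · intro y hy; simp only [Set.mem_Ico] at hy
          exact (by nlinarith [hy.1, hy.2] : (0:ℝ) < 1 - y^2).ne'
      · apply ContinuousOn.sub
        · exact (continuous_const.add continuous_id).continuousOn.log
            (fun y hy => by simp only [Set.mem_Ico] at hy; try simp only [id_eq]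
                            exact (by linarith [hy.1] : (0:ℝ) < 1 + y).ne')
        · exact (continuous_const.sub continuous_id).continuousOn.log
            (fun y hy => by simp only [Set.mem_Ico] at hy; try simp only [id_eq]
                            exact (by linarith [hy.2] : (0:ℝ) < 1 - y).ne')
    · intro y hy
      rw [interior_Ico, Set.mem_Ioo] at hy
      have h1 : (0:ℝ) < 1 + y := by linarith [hy.1]
      have h2 : (0:ℝ) < 1 - y := by linarith [hy.2]
      have hD : (0:ℝ) < 1 - y^2 := by nlinarith [hy.1, hy.2]
      have d1 : HasDerivAt (fun z : ℝ => Real.log (1 + z)) (1/(1+y)) y := by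
        have := (Real.hasDerivAt_log h1.ne').comp y ((hasDerivAt_id y).const_add 1)
        simpa [Function.comp_def] using this
      have d2 : HasDerivAt (fun z : ℝ => Real.log (1 - z)) (-(1/(1-y))) y := by
        have := (Real.hasDerivAt_log h2.ne').comp y ((hasDerivAt_id y).neg.const_add 1)
        simpa [neg_div, Function.comp_def] using this
      have dnum : HasDerivAt (fun z : ℝ => (2/3) * z^3) (2 * y^2) y := by
        have := (hasDerivAt_pow 3 y).const_mul (2/3:ℝ)
        convert this using 1 <;> try rfl
        all_goals push_cast; ring
      have dden : HasDerivAt (fun z : ℝ => 1 - z^2) (-(2*y)) y := by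
        have := ((hasDerivAt_pow 2 y)).neg.const_add 1
        convert this using 1 <;> try rfl
        all_goals push_cast; ring
      have dquot : HasDerivAt (fun z : ℝ => (2/3) * z^3 / (1 - z^2))
          ((2*y^2 * (1-y^2) - (2/3)*y^3 * (-(2*y))) / (1-y^2)^2) y :=
        dnum.div dden hD.ne'
      have d3 : HasDerivAt g ((4/3) * y^4 / (1-y^2)^2) y := by
        have h := (((hasDerivAt_id y).const_mul 2).add dquot).sub (d1.sub d2)
        convert h using 1 <;> try rfl
        field_simp; ring
      rw [d3.deriv]
      exact div_pos (by nlinarith [pow_pos hy.1 4]) (by positivity)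
  have h0 : g 0 = 0 := by simp [hg]
  have := key (Set.mem_Ico.mpr ⟨le_refl 0, one_pos⟩) (Set.mem_Ico.mpr ⟨hx.le, hx1⟩) hx
  rw [h0] at this
  simp only [hg] at this
  linarith

lemma step_bounds (n : ℕ) (hn : 1 ≤ n) :
    1/((n:ℝ)+1) < (1/2)*(Real.log ((n:ℝ)+2) - Real.log n) ∧
    (1/2)*(Real.log ((n:ℝ)+2) - Real.log n)
      < 1/((n:ℝ)+1) + 1/(3*(n:ℝ)*((n:ℝ)+1)*((n:ℝ)+2)) := by
  have hn' : (1:ℝ) ≤ (n:ℝ) := by exact_mod_cast hn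
  have hn0 : (0:ℝ) < (n:ℝ) := by linarith
  set x : ℝ := 1/((n:ℝ)+1) with hxdef
  have hx : 0 < x := by positivity
  have hx1 : x < 1 := by
    rw [hxdef, div_lt_one (by positivity)]; linarith
  have e1 : Real.log (1+x) - Real.log (1-x) = Real.log ((n:ℝ)+2) - Real.log n := by
    have h1 : (1:ℝ)+x = ((n:ℝ)+2)/((n:ℝ)+1) := by rw [hxdef]; field_simp; ring
    have h2 : (1:ℝ)-x = (n:ℝ)/((n:ℝ)+1) := by rw [hxdef]; field_simp; ring
    rw [h1, h2, Real.log_div (by positivity) (by positivity),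
      Real.log_div (by positivity) (by positivity)]
    ring
  have e2 : (2/3)*x^3/(1-x^2) = 2/(3*(n:ℝ)*((n:ℝ)+1)*((n:ℝ)+2)) := by
    have hD : (0:ℝ) < 1 - x^2 := by nlinarith
    rw [div_eq_div_iff hD.ne' (by positivity)]
    rw [hxdef]
    field_simp
    ring
  constructor
  · have := log_ineq_lower hx hx1
    rw [e1] at this; linarith
  · have := log_ineq_upper hx hx1
    rw [e1, e2] at this
    have h4 : (1:ℝ)/(3*(n:ℝ)*((n:ℝ)+1)*((n:ℝ)+2)) * 2 = 2/(3*(n:ℝ)*((n:ℝ)+1)*((n:ℝ)+2)) := by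
      ring
    linarith

noncomputable def Dseq (k : ℕ) : ℝ :=
  (harmonic (k+1) : ℝ) - (1/2) * Real.log (((k:ℝ)+1)*((k:ℝ)+2)) - Real.eulerMascheroniConstant

lemma Dseq_diff (k : ℕ) :
    Dseq k - Dseq (k+1) = (1/2)*(Real.log ((k:ℝ)+3) - Real.log ((k:ℝ)+1)) - 1/((k:ℝ)+2) := by
  have hh : (harmonic (k+1+1) : ℝ) = (harmonic (k+1) : ℝ) + 1/((k:ℝ)+2) := by
    rw [harmonic_succ]; push_cast; ring
  have hlog1 : Real.log (((k:ℝ)+1)*((k:ℝ)+2))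
      = Real.log ((k:ℝ)+1) + Real.log ((k:ℝ)+2) := Real.log_mul (by positivity) (by positivity)
  have hlog2 : Real.log (((k:ℝ)+2)*((k:ℝ)+3))
      = Real.log ((k:ℝ)+2) + Real.log ((k:ℝ)+3) := Real.log_mul (by positivity) (by positivity)
  simp only [Dseq]
  push_cast
  rw [show ((k:ℝ)+1+1) = (k:ℝ)+2 by ring, show ((k:ℝ)+1+2) = (k:ℝ)+3 by ring, hh, hlog1, hlog2]
  ring

lemma Dseq_strictAnti : StrictAnti Dseq := by
  apply strictAnti_nat_of_succ_lt
  intro k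
  have hstep := (step_bounds (k+1) (by omega)).1
  push_cast at hstep
  have hd := Dseq_diff k
  have h2 : ((k:ℝ)+1)+1 = (k:ℝ)+2 := by ring
  have h3 : ((k:ℝ)+1)+2 = (k:ℝ)+3 := by ring
  rw [h2, h3] at hstep
  linarith

lemma Dseq_tendsto : Tendsto Dseq atTop (𝓝 0) := by
  have hrw : ∀ k : ℕ, Dseq k = (eulerMascheroniSeq' (k+1) - eulerMascheroniConstant)
      - (1/2)*(eulerMascheroniSeq' (k+1) - eulerMascheroniSeq (k+1)) := by
    intro k
    have hlog1 : Real.log (((k:ℝ)+1)*((k:ℝ)+2))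
        = Real.log ((k:ℝ)+1) + Real.log ((k:ℝ)+2) := Real.log_mul (by positivity) (by positivity)
    simp only [Dseq, eulerMascheroniSeq', eulerMascheroniSeq, Nat.succ_ne_zero, if_false]
    push_cast
    rw [hlog1]
    ring
  have h1 : Tendsto (fun k : ℕ => eulerMascheroniSeq' (k+1)) atTop (𝓝 eulerMascheroniConstant) :=
    tendsto_eulerMascheroniSeq'.comp (tendsto_add_atTop_nat 1)
  have h2 : Tendsto (fun k : ℕ => eulerMascheroniSeq (k+1)) atTop (𝓝 eulerMascheroniConstant) :=
    tendsto_eulerMascheroniSeq.comp (tendsto_add_atTop_nat 1)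
  have h3 : Tendsto (fun k : ℕ => (eulerMascheroniSeq' (k+1) - eulerMascheroniConstant)
      - (1/2)*(eulerMascheroniSeq' (k+1) - eulerMascheroniSeq (k+1))) atTop
      (𝓝 ((eulerMascheroniConstant - eulerMascheroniConstant)
        - (1/2)*(eulerMascheroniConstant - eulerMascheroniConstant))) :=
    (h1.sub tendsto_const_nhds).sub ((h1.sub h2).const_mul (1/2:ℝ))
  simp only [sub_self, mul_zero, sub_zero] at h3
  exact h3.congr fun k => (hrw k).symm

lemma Dseq_pos (k : ℕ) : 0 < Dseq k :=
  lt_of_le_of_lt (Dseq_strictAnti.antitone.le_of_tendsto Dseq_tendsto (k+1))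
    (Dseq_strictAnti (Nat.lt_succ_self k))

noncomputable def Eseq (k : ℕ) : ℝ := Dseq k - 1/(6*((k:ℝ)+1)*((k:ℝ)+2))

lemma Eseq_strictMono : StrictMono Eseq := by
  apply strictMono_nat_of_lt_succ
  intro k
  have hstep := (step_bounds (k+1) (by omega)).2
  push_cast at hstep
  have h2 : ((k:ℝ)+1)+1 = (k:ℝ)+2 := by ring
  have h3 : ((k:ℝ)+1)+2 = (k:ℝ)+3 := by ring
  rw [h2, h3] at hstep
  have hd := Dseq_diff k
  have hid : 1/(6*((k:ℝ)+1)*((k:ℝ)+2)) - 1/(6*((k:ℝ)+2)*((k:ℝ)+3))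
      = 1/(3*((k:ℝ)+1)*((k:ℝ)+2)*((k:ℝ)+3)) := by
    rw [div_sub_div _ _ (by positivity) (by positivity), div_eq_div_iff (by positivity) (by positivity)]
    ring
  simp only [Eseq]
  push_cast
  rw [h2, h3]
  linarith

lemma Eseq_tendsto : Tendsto Eseq atTop (𝓝 0) := by
  have htail : Tendsto (fun k : ℕ => 1/(6*((k:ℝ)+1)*((k:ℝ)+2))) atTop (𝓝 0) := by
    apply squeeze_zero (fun k => by positivity) (fun k => ?_) tendsto_one_div_add_atTop_nhds_zero_nat
    apply one_div_le_one_div_of_le (by positivity)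
    nlinarith [Nat.cast_nonneg (α := ℝ) k]
  have h := Dseq_tendsto.sub htail
  simp only [sub_zero] at h
  exact h

lemma Eseq_neg (k : ℕ) : Eseq k < 0 :=
  lt_of_lt_of_le (Eseq_strictMono (Nat.lt_succ_self k))
    (Eseq_strictMono.monotone.ge_of_tendsto Eseq_tendsto (k+1))

theorem cesaro_approximation (n : ℕ) (hn : 1 ≤ n) :
    ∃ c : ℝ, 0 < c ∧ c < 1 ∧
      (harmonic n : ℝ) =
        (1 / 2) * Real.log (2 * ((n * (n + 1) : ℝ) / 2)) + Real.eulerMascheroniConstant +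
          c / (12 * ((n * (n + 1) : ℝ) / 2)) := by
  obtain ⟨k, rfl⟩ : ∃ k, n = k + 1 := ⟨n - 1, by omega⟩
  have hA : (0:ℝ) < 6*((k:ℝ)+1)*((k:ℝ)+2) := by positivity
  refine ⟨6*((k:ℝ)+1)*((k:ℝ)+2) * Dseq k, mul_pos hA (Dseq_pos k), ?_, ?_⟩
  · have hE := Eseq_neg k
    simp only [Eseq] at hE
    have h1 : Dseq k < 1/(6*((k:ℝ)+1)*((k:ℝ)+2)) := by linarith
    have h2 := mul_lt_mul_of_pos_left h1 hA
    rw [mul_one_div, div_self hA.ne'] at h2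
    linarith
  · have h1 : 2 * (((k+1:ℕ):ℝ) * (((k+1:ℕ):ℝ) + 1) / 2) = ((k:ℝ)+1)*((k:ℝ)+2) := by
      push_cast; ring
    have h2 : 12 * (((k+1:ℕ):ℝ) * (((k+1:ℕ):ℝ) + 1) / 2) = 6*((k:ℝ)+1)*((k:ℝ)+2) := by
      push_cast; ring
    rw [h1, h2, mul_div_cancel_left₀ _ hA.ne']
    have := Dseq_pos k
    simp only [Dseq] at this ⊢
    ring
end

section
/- For every positive integer n, define λ_n by H_n = (1/2)·ln(2m) + γ + 1/(12m + 6/5) + λ_n, where m := n(n+1)/2. Then 0 < λ_n < 19/(25200·m^3). -/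
open Real Filter Topology Finset

lemma log_bounds (x : ℝ) (hx : 0 < x) (hx2 : x ≤ 1/2) :
    |(1/2)*(Real.log (1+x) - Real.log (1-x)) -
      (x + x^3/3 + x^5/5 + x^7/7 + x^9/9 + x^11/11)| ≤ x^13/(1-x) := by
  have hax : |x| = x := abs_of_pos hx
  have hx1 : |x| < 1 := by rw [hax]; linarith
  have hx1' : |(-x)| < 1 := by rw [abs_neg, hax]; linarith
  have h1 := Real.abs_log_sub_add_sum_range_le hx1 12
  have h2 := Real.abs_log_sub_add_sum_range_le hx1' 12
  rw [hax] at h1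
  rw [abs_neg, hax] at h2
  simp only [Finset.sum_range_succ, Finset.sum_range_zero] at h1 h2
  norm_num at h1 h2
  ring_nf at h1 h2
  rw [abs_le] at h1 h2 ⊢
  obtain ⟨h1a, h1b⟩ := h1
  obtain ⟨h2a, h2b⟩ := h2
  have hxx : (0:ℝ) < 1 - x := by linarith
  constructor
  · ring_nf
    linarith
  · ring_nf
    linarith

lemma keyA (x : ℝ) (hx : 0 < x) (hx2 : x ≤ 1/2) :
    0 < (x + x^3/3 + x^5/5 + x^7/7 + x^9/9 + x^11/11) - x - x^13/(1-x)
        + 5*x^2/(30+30*x+6*x^2) - 5*x^2/(30-30*x+6*x^2) := by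
  have h1 : (0:ℝ) < 1 - x := by linarith
  have h2 : (0:ℝ) < 30+30*x+6*x^2 := by nlinarith
  have h3 : (0:ℝ) < 30-30*x+6*x^2 := by nlinarith
  have hy : (0:ℝ) ≤ 1-2*x := by linarith
  have hD : 0 < (1-x)*((30+30*x+6*x^2)*(30-30*x+6*x^2)) :=
    mul_pos h1 (mul_pos h2 h3)
  have hN : (0:ℝ) < 300 * ((76619/2625) * (1-2*x)^0 * x^17 + (8135213/28875) * (1-2*x)^1 * x^16 + (928786/1155) * (1-2*x)^2 * x^15 + (11484012/9625) * (1-2*x)^3 * x^14 + (6392597/5775) * (1-2*x)^4 * x^13 + (1822007/2625) * (1-2*x)^5 * x^12 + (8712989/28875) * (1-2*x)^6 * x^11 + (15767/175) * (1-2*x)^7 * x^10 + (46433/2625) * (1-2*x)^8 * x^9 + (361/175) * (1-2*x)^9 * x^8 + (19/175) * (1-2*x)^10 * x^7) := by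
    nlinarith [pow_pos hx 17, mul_nonneg (pow_nonneg hy 1) (pow_nonneg hx.le 16),
      mul_nonneg (pow_nonneg hy 2) (pow_nonneg hx.le 15),
      mul_nonneg (pow_nonneg hy 3) (pow_nonneg hx.le 14),
      mul_nonneg (pow_nonneg hy 4) (pow_nonneg hx.le 13),
      mul_nonneg (pow_nonneg hy 5) (pow_nonneg hx.le 12),
      mul_nonneg (pow_nonneg hy 6) (pow_nonneg hx.le 11),
      mul_nonneg (pow_nonneg hy 7) (pow_nonneg hx.le 10),
      mul_nonneg (pow_nonneg hy 8) (pow_nonneg hx.le 9),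
      mul_nonneg (pow_nonneg hy 9) (pow_nonneg hx.le 8),
      mul_nonneg (pow_nonneg hy 10) (pow_nonneg hx.le 7)]
  have hEq : ((x + x^3/3 + x^5/5 + x^7/7 + x^9/9 + x^11/11) - x - x^13/(1-x)
        + 5*x^2/(30+30*x+6*x^2) - 5*x^2/(30-30*x+6*x^2))
      = (300 * ((76619/2625) * (1-2*x)^0 * x^17 + (8135213/28875) * (1-2*x)^1 * x^16 + (928786/1155) * (1-2*x)^2 * x^15 + (11484012/9625) * (1-2*x)^3 * x^14 + (6392597/5775) * (1-2*x)^4 * x^13 + (1822007/2625) * (1-2*x)^5 * x^12 + (8712989/28875) * (1-2*x)^6 * x^11 + (15767/175) * (1-2*x)^7 * x^10 + (46433/2625) * (1-2*x)^8 * x^9 + (361/175) * (1-2*x)^9 * x^8 + (19/175) * (1-2*x)^10 * x^7))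
        / ((1-x)*((30+30*x+6*x^2)*(30-30*x+6*x^2))) := by
    rw [eq_div_iff hD.ne']
    field_simp
    ring
  rw [hEq]
  exact div_pos hN hD

set_option maxHeartbeats 2000000 in

lemma keyB (x : ℝ) (hx : 0 < x) (hx2 : x ≤ 1/2) :
    (x + x^3/3 + x^5/5 + x^7/7 + x^9/9 + x^11/11) - x + x^13/(1-x)
        + 5*x^2/(30+30*x+6*x^2) - 5*x^2/(30-30*x+6*x^2)
      < 19*x^7*(6+2*x^2)/(3150*(1-x^2)^3) := by
  have h1 : (0:ℝ) < 1 - x := by linarith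
  have h1' : (0:ℝ) < 1 + x := by linarith
  have h2 : (0:ℝ) < 30+30*x+6*x^2 := by nlinarith
  have h3 : (0:ℝ) < 30-30*x+6*x^2 := by nlinarith
  have hy : (0:ℝ) ≤ 1-2*x := by linarith
  have h1x2 : (0:ℝ) < 1 - x^2 := by nlinarith
  have hD : 0 < (3150*(1-x)^4*(1+x)^3)*((30+30*x+6*x^2)*(30-30*x+6*x^2)) := by
    have : (0:ℝ) < (1-x)^4 := by positivity
    have h4 : (0:ℝ) < (1+x)^3 := by positivity
    nlinarith [mul_pos h2 h3, mul_pos (mul_pos this h4) (mul_pos h2 h3)]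
  have hN : (0:ℝ) < 300 * ((22671654/25) * (1-2*x)^0 * x^23 + (3327248598/275) * (1-2*x)^1 * x^22 + (16573729746/275) * (1-2*x)^2 * x^21 + (45261747126/275) * (1-2*x)^3 * x^20 + (78755438352/275) * (1-2*x)^4 * x^19 + (94295872128/275) * (1-2*x)^5 * x^18 + (81202365006/275) * (1-2*x)^6 * x^17 + (51610404762/275) * (1-2*x)^7 * x^16 + (24529987938/275) * (1-2*x)^8 * x^15 + (8736010596/275) * (1-2*x)^9 * x^14 + (2307451698/275) * (1-2*x)^10 * x^13 + (440090406/275) * (1-2*x)^11 * x^12 + (57439962/275) * (1-2*x)^12 * x^11 + (83592/5) * (1-2*x)^13 * x^10 + (3096/5) * (1-2*x)^14 * x^9) := by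
    nlinarith [pow_pos hx 23, mul_nonneg (pow_nonneg hy 1) (pow_nonneg hx.le 22),
      mul_nonneg (pow_nonneg hy 2) (pow_nonneg hx.le 21),
      mul_nonneg (pow_nonneg hy 3) (pow_nonneg hx.le 20),
      mul_nonneg (pow_nonneg hy 4) (pow_nonneg hx.le 19),
      mul_nonneg (pow_nonneg hy 5) (pow_nonneg hx.le 18),
      mul_nonneg (pow_nonneg hy 6) (pow_nonneg hx.le 17),
      mul_nonneg (pow_nonneg hy 7) (pow_nonneg hx.le 16),
      mul_nonneg (pow_nonneg hy 8) (pow_nonneg hx.le 15),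
      mul_nonneg (pow_nonneg hy 9) (pow_nonneg hx.le 14),
      mul_nonneg (pow_nonneg hy 10) (pow_nonneg hx.le 13),
      mul_nonneg (pow_nonneg hy 11) (pow_nonneg hx.le 12),
      mul_nonneg (pow_nonneg hy 12) (pow_nonneg hx.le 11),
      mul_nonneg (pow_nonneg hy 13) (pow_nonneg hx.le 10),
      mul_nonneg (pow_nonneg hy 14) (pow_nonneg hx.le 9)]
  rw [← sub_pos]
  have hEq : (19*x^7*(6+2*x^2)/(3150*(1-x^2)^3)
      - ((x + x^3/3 + x^5/5 + x^7/7 + x^9/9 + x^11/11) - x + x^13/(1-x)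
        + 5*x^2/(30+30*x+6*x^2) - 5*x^2/(30-30*x+6*x^2)))
      = (300 * ((22671654/25) * (1-2*x)^0 * x^23 + (3327248598/275) * (1-2*x)^1 * x^22 + (16573729746/275) * (1-2*x)^2 * x^21 + (45261747126/275) * (1-2*x)^3 * x^20 + (78755438352/275) * (1-2*x)^4 * x^19 + (94295872128/275) * (1-2*x)^5 * x^18 + (81202365006/275) * (1-2*x)^6 * x^17 + (51610404762/275) * (1-2*x)^7 * x^16 + (24529987938/275) * (1-2*x)^8 * x^15 + (8736010596/275) * (1-2*x)^9 * x^14 + (2307451698/275) * (1-2*x)^10 * x^13 + (440090406/275) * (1-2*x)^11 * x^12 + (57439962/275) * (1-2*x)^12 * x^11 + (83592/5) * (1-2*x)^13 * x^10 + (3096/5) * (1-2*x)^14 * x^9))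
        / ((3150*(1-x)^4*(1+x)^3)*((30+30*x+6*x^2)*(30-30*x+6*x^2))) := by
    rw [eq_div_iff hD.ne']
    have e : (1:ℝ) - x^2 = (1-x)*(1+x) := by ring
    rw [e]
    field_simp
    ring
  rw [hEq]
  exact div_pos hN hD

noncomputable def fL (k : ℕ) : ℝ :=
  harmonic k - (1/2)*Real.log ((k:ℝ)*((k:ℝ)+1)) - 1/(6*(k:ℝ)*((k:ℝ)+1)+6/5)

noncomputable def gL (k : ℕ) : ℝ := 19/(3150*((k:ℝ)*((k:ℝ)+1))^3)

lemma fL_sub (k : ℕ) (hk : 1 ≤ k) :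
    fL k - fL (k+1) =
      (1/2)*(Real.log (1+(1/((k:ℝ)+1))) - Real.log (1-(1/((k:ℝ)+1)))) - (1/((k:ℝ)+1))
        + 5*(1/((k:ℝ)+1))^2/(30+30*(1/((k:ℝ)+1))+6*(1/((k:ℝ)+1))^2)
        - 5*(1/((k:ℝ)+1))^2/(30-30*(1/((k:ℝ)+1))+6*(1/((k:ℝ)+1))^2) := by
  have hc0 : (0:ℝ) < (k:ℝ) := by exact_mod_cast hk
  set c : ℝ := (k:ℝ) with hc
  have hc1 : (0:ℝ) < c + 1 := by linarith
  have hc2 : (0:ℝ) < c + 2 := by linarith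
  have hh : (harmonic (k+1) : ℝ) = (harmonic k : ℝ) + 1/(c+1) := by
    rw [harmonic_succ]; push_cast; ring
  have lg1 : Real.log (1+(1/(c+1))) = Real.log (c+2) - Real.log (c+1) := by
    rw [show 1+(1/(c+1)) = (c+2)/(c+1) by field_simp; ring]
    exact Real.log_div hc2.ne' hc1.ne'
  have lg2 : Real.log (1-(1/(c+1))) = Real.log c - Real.log (c+1) := by
    rw [show 1-(1/(c+1)) = c/(c+1) by field_simp; ring]
    exact Real.log_div hc0.ne' hc1.ne'
  have lm1 : Real.log (c*(c+1)) = Real.log c + Real.log (c+1) :=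
    Real.log_mul hc0.ne' hc1.ne'
  have lm2 : Real.log (((k:ℝ)+1)*(((k:ℝ)+1)+1)) = Real.log (c+1) + Real.log (c+2) := by
    rw [show ((k:ℝ)+1)*(((k:ℝ)+1)+1) = (c+1)*(c+2) by ring]
    exact Real.log_mul hc1.ne' hc2.ne'
  unfold fL
  push_cast
  rw [hh, lm2, lm1, lg1, lg2]
  have d1 : (0:ℝ) < (6*c*(c+1)+6/5) := by positivity
  have d2 : (0:ℝ) < (6*(c+1)*((c+1)+1)+6/5) := by positivity
  have d3 : (0:ℝ) < 30+30*(1/(c+1))+6*(1/(c+1))^2 := by positivity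
  have d4 : (0:ℝ) < 30-30*(1/(c+1))+6*(1/(c+1))^2 := by
    have hx : 1/(c+1) ≤ 1 := by rw [div_le_one hc1]; linarith
    have hx0 : 0 < 1/(c+1) := by positivity
    nlinarith
  have r1 : 1/(6*(c+1)*((c+1)+1)+6/5)
      = 5*(1/(c+1))^2/(30+30*(1/(c+1))+6*(1/(c+1))^2) := by
    rw [div_eq_div_iff d2.ne' d3.ne']
    field_simp
    ring
  have r2 : 1/(6*c*(c+1)+6/5)
      = 5*(1/(c+1))^2/(30-30*(1/(c+1))+6*(1/(c+1))^2) := by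
    rw [div_eq_div_iff d1.ne' d4.ne']
    field_simp
    ring
  rw [r1, r2]
  ring

lemma gL_sub (k : ℕ) (hk : 1 ≤ k) :
    gL k - gL (k+1) =
      19*(1/((k:ℝ)+1))^7*(6+2*(1/((k:ℝ)+1))^2)/(3150*(1-(1/((k:ℝ)+1))^2)^3) := by
  have hc0 : (0:ℝ) < (k:ℝ) := by exact_mod_cast hk
  set c : ℝ := (k:ℝ) with hc
  have hc1 : (0:ℝ) < c + 1 := by linarith
  have hc2 : (0:ℝ) < c + 2 := by linarith
  have hx0 : (0:ℝ) < 1/(c+1) := by positivity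
  have hx1 : 1/(c+1) < 1 := by rw [div_lt_one hc1]; linarith
  have p1 : (0:ℝ) < 1 - 1/(c+1) := by linarith
  have p2 : (0:ℝ) < 1 + 1/(c+1) := by linarith
  have p3 : (0:ℝ) < 1 - (1/(c+1))^2 := by nlinarith
  have q1 : (0:ℝ) < 3150*(1-(1/(c+1)))^3 := by
    have := pow_pos p1 3; linarith
  have q2 : (0:ℝ) < 3150*(1+(1/(c+1)))^3 := by
    have := pow_pos p2 3; linarith
  have q3 : (0:ℝ) < 3150*(1-(1/(c+1))^2)^3 := by
    have := pow_pos p3 3; linarith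
  have e1 : gL k = 19*(1/(c+1))^6/(3150*(1-(1/(c+1)))^3) := by
    unfold gL
    rw [div_eq_div_iff (by positivity) q1.ne']
    field_simp
    ring
  have e2 : gL (k+1) = 19*(1/(c+1))^6/(3150*(1+(1/(c+1)))^3) := by
    unfold gL
    push_cast
    rw [div_eq_div_iff (by positivity) q2.ne']
    field_simp
    ring
  rw [e1, e2, div_sub_div _ _ q1.ne' q2.ne',
    div_eq_div_iff (by positivity) q3.ne']
  field_simp
  ring

lemma xconds (k : ℕ) (hk : 1 ≤ k) :
    0 < 1/((k:ℝ)+1) ∧ 1/((k:ℝ)+1) ≤ 1/2 := by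
  have hc0 : (1:ℝ) ≤ (k:ℝ) := by exact_mod_cast hk
  constructor
  · positivity
  · rw [div_le_div_iff₀ (by linarith) (by norm_num)]; linarith

lemma step_pos (k : ℕ) (hk : 1 ≤ k) : fL (k+1) < fL k := by
  obtain ⟨hx, hx2⟩ := xconds k hk
  set x := 1/((k:ℝ)+1)
  have hlog := abs_le.mp (log_bounds x hx hx2)
  have hA := keyA x hx hx2
  have h := fL_sub k hk
  have : 0 < fL k - fL (k+1) := by rw [h]; linarith [hlog.1, hlog.2]
  linarith

lemma step_ub (k : ℕ) (hk : 1 ≤ k) : fL k - fL (k+1) < gL k - gL (k+1) := by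
  obtain ⟨hx, hx2⟩ := xconds k hk
  set x := 1/((k:ℝ)+1)
  have hlog := abs_le.mp (log_bounds x hx hx2)
  have hB := keyB x hx hx2
  rw [fL_sub k hk, gL_sub k hk]
  linarith [hlog.1, hlog.2]

lemma fL_tendsto : Tendsto fL atTop (𝓝 Real.eulerMascheroniConstant) := by
  have h1 : Tendsto (fun k : ℕ ↦ (harmonic k : ℝ) - Real.log k) atTop
      (𝓝 Real.eulerMascheroniConstant) := Real.tendsto_harmonic_sub_log
  have h2 : Tendsto (fun k : ℕ ↦ (1/2) * (Real.log ((k:ℝ)+1) - Real.log k)) atTop (𝓝 0) := by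
    have hbase : Tendsto (fun x : ℝ ↦ Real.log (x + 1) - Real.log x) atTop (𝓝 0) := by
      have : Tendsto (fun x : ℝ ↦ Real.log (1 + 1 / x)) atTop (𝓝 0) := by
        simpa only [add_zero, Real.log_one, id] using
          ((tendsto_const_nhds.div_atTop tendsto_id).const_add 1).log (by positivity)
      apply this.congr'
      filter_upwards [eventually_gt_atTop 0] with x hx0
      rw [← Real.log_div (by positivity) (by positivity), add_div, div_self hx0.ne']
    have hnat : Tendsto (fun k : ℕ ↦ (k:ℝ)) atTop atTop := tendsto_natCast_atTop_atTop
    have := (hbase.comp hnat).const_mul (1/2:ℝ)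
    simpa [Function.comp] using this
  have h3 : Tendsto (fun k : ℕ ↦ 1/(6*(k:ℝ)*((k:ℝ)+1)+6/5)) atTop (𝓝 0) := by
    apply Tendsto.comp tendsto_inv_atTop_zero ?_ |>.congr (fun k => by rw [Function.comp_apply, one_div])
    apply tendsto_atTop_add_const_right
    have : Tendsto (fun k : ℕ ↦ (k:ℝ)) atTop atTop := tendsto_natCast_atTop_atTop
    apply Tendsto.atTop_mul_atTop₀ (by simpa using this.const_mul_atTop (by norm_num : (0:ℝ) < 6))
      (tendsto_atTop_add_const_right _ _ this)
  have key : Tendsto (fun k : ℕ ↦ ((harmonic k : ℝ) - Real.log k)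
      - (1/2) * (Real.log ((k:ℝ)+1) - Real.log k) - 1/(6*(k:ℝ)*((k:ℝ)+1)+6/5)) atTop
      (𝓝 Real.eulerMascheroniConstant) := by
    simpa using (h1.sub h2).sub h3
  apply key.congr'
  filter_upwards [eventually_ge_atTop 1] with k hk
  have hc0 : (0:ℝ) < (k:ℝ) := by exact_mod_cast hk
  unfold fL
  rw [Real.log_mul hc0.ne' (by linarith)]
  ring

lemma gL_tendsto : Tendsto gL atTop (𝓝 0) := by
  have h : Tendsto (fun k : ℕ ↦ (k:ℝ)) atTop atTop := tendsto_natCast_atTop_atTop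
  have h2 : Tendsto (fun k : ℕ ↦ (k:ℝ)*((k:ℝ)+1)) atTop atTop :=
    Tendsto.atTop_mul_atTop₀ h (tendsto_atTop_add_const_right _ _ h)
  have h3 : Tendsto (fun k : ℕ ↦ 3150*((k:ℝ)*((k:ℝ)+1))^3) atTop atTop :=
    ((tendsto_pow_atTop (by norm_num)).comp h2).const_mul_atTop (by norm_num)
  exact tendsto_const_nhds.div_atTop h3

lemma fL_chain (a b : ℕ) (ha : 1 ≤ a) (hab : a ≤ b) : fL b ≤ fL a := by
  induction b, hab using Nat.le_induction with
  | base => exact le_refl _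
  | succ n hn ih => exact le_trans (step_pos n (le_trans ha hn)).le ih

lemma fLg_chain (a b : ℕ) (ha : 1 ≤ a) (hab : a ≤ b) : fL a - gL a ≤ fL b - gL b := by
  induction b, hab using Nat.le_induction with
  | base => exact le_refl _
  | succ n hn ih =>
    have := step_ub n (le_trans ha hn)
    linarith

theorem lodge_lambda_bounds (n : ℕ) (hn : 1 ≤ n) :
    0 < (harmonic n : ℝ) -
          ((1 / 2) * Real.log (2 * ((n * (n + 1) : ℝ) / 2)) + Real.eulerMascheroniConstant +
            1 / (12 * ((n * (n + 1) : ℝ) / 2) + 6 / 5)) ∧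
      (harmonic n : ℝ) -
          ((1 / 2) * Real.log (2 * ((n * (n + 1) : ℝ) / 2)) + Real.eulerMascheroniConstant +
            1 / (12 * ((n * (n + 1) : ℝ) / 2) + 6 / 5)) <
        19 / (25200 * ((n * (n + 1) : ℝ) / 2) ^ 3) := by
  have hγle : Real.eulerMascheroniConstant ≤ fL (n+1) := by
    refine le_of_tendsto fL_tendsto ?_
    filter_upwards [eventually_ge_atTop (n+1)] with b hb
    exact fL_chain (n+1) b (by omega) hb
  have h1 : Real.eulerMascheroniConstant < fL n := lt_of_le_of_lt hγle (step_pos n hn)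
  have hlim2 : Filter.Tendsto (fun k ↦ fL k - gL k) Filter.atTop (𝓝 Real.eulerMascheroniConstant) := by
    simpa using fL_tendsto.sub gL_tendsto
  have hle2 : fL (n+1) - gL (n+1) ≤ Real.eulerMascheroniConstant := by
    refine ge_of_tendsto hlim2 ?_
    filter_upwards [eventually_ge_atTop (n+1)] with b hb
    exact fLg_chain (n+1) b (by omega) hb
  have h2 : fL n - Real.eulerMascheroniConstant < gL n := by
    have := step_ub n hn
    linarith
  rw [show (2 * (((n:ℝ) * ((n:ℝ) + 1)) / 2)) = (n:ℝ)*((n:ℝ)+1) from by ring,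
    show (12 * (((n:ℝ) * ((n:ℝ) + 1)) / 2) + 6/5) = 6*(n:ℝ)*((n:ℝ)+1)+6/5 from by ring,
    show (25200 * (((n:ℝ) * ((n:ℝ) + 1)) / 2) ^ 3) = 3150*((n:ℝ)*((n:ℝ)+1))^3 from by ring]
  unfold fL at h1 h2
  unfold gL at h2
  constructor <;> linarith
end

section
/- For every positive integer n, define λ_n by H_n = (1/2)·ln(2m) + γ + 1/(12m + 6/5) + λ_n, where m := n(n+1)/2. Then λ_n = 19/(25200·m^3) − ρ_n for some ρ_n with 0 < ρ_n < 43/(84000·m^4). -/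
open Real Filter Finset Topology



private lemma rat_low (k : ℝ) (hk : 1 ≤ k) :
    0 < 1/(k+1)
      - (1/(k+1) + 1/(3*(k+1)^3) + 1/(5*(k+1)^5) + 1/(7*(k+1)^7) + 1/(9*(k+1)^9)
          + 1/(11*(k+1)^11) + 1/(13*(k+1)^13))
      - 1/(k*(k+1)^14)
      - (1/(12*((k+1)*(k+2)/2) + 6/5) - 1/(12*(k*(k+1)/2) + 6/5))
      + 19/25200 * (1/(k*(k+1)/2)^3 - 1/((k+1)*(k+2)/2)^3) := by
  obtain ⟨x, hx, rfl⟩ : ∃ x : ℝ, 0 ≤ x ∧ k = x + 1 := ⟨k - 1, by linarith, by ring⟩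
  have h1 : (0:ℝ) < x + 1 := by linarith
  have h2 : (0:ℝ) < x + 2 := by linarith
  have h3 : (0:ℝ) < x + 3 := by linarith
  have h4 : (0:ℝ) < 12*((x+1)*(x+2)/2) + 6/5 := by nlinarith
  have h5 : (0:ℝ) < 12*((x+2)*(x+3)/2) + 6/5 := by nlinarith
  have hN : (0:ℝ) < 32253126092 + 268662552064*x + 1018896928276*x^2 + 2343056605736*x^3
      + 3669485310800*x^4 + 4163057991632*x^5 + 3547434637764*x^6 + 2318567323536*x^7
      + 1174207288716*x^8 + 461322151400*x^9 + 139540412088*x^10 + 31920498516*x^11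
      + 5345925624*x^12 + 618825324*x^13 + 44272800*x^14 + 1475760*x^15 := by
    have p2 := pow_nonneg hx 2; have p3 := pow_nonneg hx 3; have p4 := pow_nonneg hx 4
    have p5 := pow_nonneg hx 5; have p6 := pow_nonneg hx 6; have p7 := pow_nonneg hx 7
    have p8 := pow_nonneg hx 8; have p9 := pow_nonneg hx 9; have p10 := pow_nonneg hx 10
    have p11 := pow_nonneg hx 11; have p12 := pow_nonneg hx 12; have p13 := pow_nonneg hx 13
    have p14 := pow_nonneg hx 14; have p15 := pow_nonneg hx 15
    linarith
  have hD : (0:ℝ) < 625625 * ((x+1)^3 * (x+2)^14 * (x+3)^3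
      * ((12*((x+1)*(x+2)/2) + 6/5) * (12*((x+2)*(x+3)/2) + 6/5))) := by
    have := mul_pos (mul_pos (mul_pos (pow_pos h1 3) (pow_pos h2 14)) (pow_pos h3 3))
      (mul_pos h4 h5)
    linarith
  have key : 1/(x+1+1)
      - (1/(x+1+1) + 1/(3*(x+1+1)^3) + 1/(5*(x+1+1)^5) + 1/(7*(x+1+1)^7) + 1/(9*(x+1+1)^9)
          + 1/(11*(x+1+1)^11) + 1/(13*(x+1+1)^13))
      - 1/((x+1)*(x+1+1)^14)
      - (1/(12*((x+1+1)*(x+1+2)/2) + 6/5) - 1/(12*((x+1)*(x+1+1)/2) + 6/5))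
      + 19/25200 * (1/((x+1)*(x+1+1)/2)^3 - 1/((x+1+1)*(x+1+2)/2)^3)
      = (32253126092 + 268662552064*x + 1018896928276*x^2 + 2343056605736*x^3
      + 3669485310800*x^4 + 4163057991632*x^5 + 3547434637764*x^6 + 2318567323536*x^7
      + 1174207288716*x^8 + 461322151400*x^9 + 139540412088*x^10 + 31920498516*x^11
      + 5345925624*x^12 + 618825324*x^13 + 44272800*x^14 + 1475760*x^15)
      / (625625 * ((x+1)^3 * (x+2)^14 * (x+3)^3
      * ((12*((x+1)*(x+2)/2) + 6/5) * (12*((x+2)*(x+3)/2) + 6/5)))) := by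
    rw [eq_div_iff hD.ne']
    field_simp
    ring
  rw [key]
  exact div_pos hN hD


private lemma rat_upp (k : ℝ) (hk : 1 ≤ k) :
    1/(k+1)
      - (1/(k+1) + 1/(3*(k+1)^3) + 1/(5*(k+1)^5) + 1/(7*(k+1)^7) + 1/(9*(k+1)^9)
          + 1/(11*(k+1)^11) + 1/(13*(k+1)^13))
      + 1/(k*(k+1)^14)
      - (1/(12*((k+1)*(k+2)/2) + 6/5) - 1/(12*(k*(k+1)/2) + 6/5))
      + 19/25200 * (1/(k*(k+1)/2)^3 - 1/((k+1)*(k+2)/2)^3)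
      < 43/84000 * (1/(k*(k+1)/2)^4 - 1/((k+1)*(k+2)/2)^4) := by
  rw [← sub_pos]
  obtain ⟨x, hx, rfl⟩ : ∃ x : ℝ, 0 ≤ x ∧ k = x + 1 := ⟨k - 1, by linarith, by ring⟩
  have h1 : (0:ℝ) < x + 1 := by linarith
  have h2 : (0:ℝ) < x + 2 := by linarith
  have h3 : (0:ℝ) < x + 3 := by linarith
  have h4 : (0:ℝ) < 12*((x+1)*(x+2)/2) + 6/5 := by nlinarith
  have h5 : (0:ℝ) < 12*((x+2)*(x+3)/2) + 6/5 := by nlinarith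
  have hN : (0:ℝ) < 297989079300 + 2436175739384*x + 9277632200808*x^2 + 21729467697608*x^3
      + 34890452109540*x^4 + 40614180703600*x^5 + 35396351301724*x^6 + 23537682566408*x^7
      + 12059116470408*x^8 + 4769095190520*x^9 + 1446787129700*x^10 + 331202409716*x^11
      + 55455643152*x^12 + 6416825352*x^13 + 458991000*x^14 + 15299700*x^15 := by
    have p2 := pow_nonneg hx 2; have p3 := pow_nonneg hx 3; have p4 := pow_nonneg hx 4
    have p5 := pow_nonneg hx 5; have p6 := pow_nonneg hx 6; have p7 := pow_nonneg hx 7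
    have p8 := pow_nonneg hx 8; have p9 := pow_nonneg hx 9; have p10 := pow_nonneg hx 10
    have p11 := pow_nonneg hx 11; have p12 := pow_nonneg hx 12; have p13 := pow_nonneg hx 13
    have p14 := pow_nonneg hx 14; have p15 := pow_nonneg hx 15
    linarith
  have hD : (0:ℝ) < 3128125 * ((x+1)^4 * (x+2)^14 * (x+3)^4
      * ((12*((x+1)*(x+2)/2) + 6/5) * (12*((x+2)*(x+3)/2) + 6/5))) := by
    have := mul_pos (mul_pos (mul_pos (pow_pos h1 4) (pow_pos h2 14)) (pow_pos h3 4))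
      (mul_pos h4 h5)
    linarith
  have key : 43/84000 * (1/((x+1)*(x+1+1)/2)^4 - 1/((x+1+1)*(x+1+2)/2)^4)
      - (1/(x+1+1)
      - (1/(x+1+1) + 1/(3*(x+1+1)^3) + 1/(5*(x+1+1)^5) + 1/(7*(x+1+1)^7) + 1/(9*(x+1+1)^9)
          + 1/(11*(x+1+1)^11) + 1/(13*(x+1+1)^13))
      + 1/((x+1)*(x+1+1)^14)
      - (1/(12*((x+1+1)*(x+1+2)/2) + 6/5) - 1/(12*((x+1)*(x+1+1)/2) + 6/5))
      + 19/25200 * (1/((x+1)*(x+1+1)/2)^3 - 1/((x+1+1)*(x+1+2)/2)^3))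
      = (297989079300 + 2436175739384*x + 9277632200808*x^2 + 21729467697608*x^3
      + 34890452109540*x^4 + 40614180703600*x^5 + 35396351301724*x^6 + 23537682566408*x^7
      + 12059116470408*x^8 + 4769095190520*x^9 + 1446787129700*x^10 + 331202409716*x^11
      + 55455643152*x^12 + 6416825352*x^13 + 458991000*x^14 + 15299700*x^15)
      / (3128125 * ((x+1)^4 * (x+2)^14 * (x+3)^4
      * ((12*((x+1)*(x+2)/2) + 6/5) * (12*((x+2)*(x+3)/2) + 6/5)))) := by
    rw [eq_div_iff hD.ne']
    field_simp
    ring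
  rw [key]
  exact div_pos hN hD


private lemma log_bound (k : ℝ) (hk : 1 ≤ k) :
    |Real.log ((k+2)/k) - 2*(1/(k+1) + 1/(3*(k+1)^3) + 1/(5*(k+1)^5) + 1/(7*(k+1)^7)
        + 1/(9*(k+1)^9) + 1/(11*(k+1)^11) + 1/(13*(k+1)^13))| ≤ 2/(k*(k+1)^14) := by
  have hk0 : (0:ℝ) < k := by linarith
  have hk1 : (0:ℝ) < k + 1 := by linarith
  have hk2 : (0:ℝ) < k + 2 := by linarith
  set t : ℝ := 1/(k+1) with ht
  have ht0 : 0 < t := by positivity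
  have ht05 : t ≤ 1/2 := by
    rw [ht, div_le_div_iff₀ hk1 (by norm_num)]; linarith
  have habs : |t| < 1 := by rw [abs_of_pos ht0]; linarith
  have habs' : |(-t)| < 1 := by rwa [abs_neg]
  have hA := Real.abs_log_sub_add_sum_range_le habs 14
  have hB := Real.abs_log_sub_add_sum_range_le habs' 14
  simp only [Finset.sum_range_succ, Finset.sum_range_zero] at hA hB
  norm_num at hA hB
  have h1t : 1 - t = k/(k+1) := by
    rw [ht, eq_div_iff hk1.ne', sub_mul, one_mul, div_mul_cancel₀ _ hk1.ne']; ring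
  have h1t' : 1 + t = (k+2)/(k+1) := by
    rw [ht, eq_div_iff hk1.ne', add_mul, one_mul, div_mul_cancel₀ _ hk1.ne']; ring
  have hlogA : Real.log (1 - t) = Real.log k - Real.log (k+1) := by
    rw [h1t, Real.log_div hk0.ne' hk1.ne']
  have hlogB : Real.log (1 + t) = Real.log (k+2) - Real.log (k+1) := by
    rw [h1t', Real.log_div hk2.ne' hk1.ne']
  have hlogT : Real.log ((k+2)/k) = Real.log (k+2) - Real.log k :=
    Real.log_div hk2.ne' hk0.ne'
  rw [hlogA] at hA
  rw [hlogB] at hB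
  have habst : |t| = t := abs_of_pos ht0
  rw [habst] at hA hB
  have hE : t^15/(1-t) = 1/(k*(k+1)^14) := by
    rw [h1t, ht, eq_div_iff (by positivity : k*(k+1)^14 ≠ 0)]
    field_simp
  rw [hE] at hA hB
  have hA2 : |(Real.log k - Real.log (k+1)) + (t + t^2/2 + t^3/3 + t^4/4 + t^5/5 + t^6/6
      + t^7/7 + t^8/8 + t^9/9 + t^10/10 + t^11/11 + t^12/12 + t^13/13 + t^14/14)|
      ≤ 1/(k*(k+1)^14) := by
    convert hA using 2
    ring
  have hB2 : |(Real.log (k+2) - Real.log (k+1)) - (t - t^2/2 + t^3/3 - t^4/4 + t^5/5 - t^6/6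
      + t^7/7 - t^8/8 + t^9/9 - t^10/10 + t^11/11 - t^12/12 + t^13/13 - t^14/14)|
      ≤ 1/(k*(k+1)^14) := by
    convert hB using 2
    ring
  have e3 : 1/(3*(k+1)^3) = t^3/3 := by rw [ht, div_pow, one_pow, div_div, mul_comm]
  have e5 : 1/(5*(k+1)^5) = t^5/5 := by rw [ht, div_pow, one_pow, div_div, mul_comm]
  have e7 : 1/(7*(k+1)^7) = t^7/7 := by rw [ht, div_pow, one_pow, div_div, mul_comm]
  have e9 : 1/(9*(k+1)^9) = t^9/9 := by rw [ht, div_pow, one_pow, div_div, mul_comm]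
  have e11 : 1/(11*(k+1)^11) = t^11/11 := by rw [ht, div_pow, one_pow, div_div, mul_comm]
  have e13 : 1/(13*(k+1)^13) = t^13/13 := by rw [ht, div_pow, one_pow, div_div, mul_comm]
  rw [hlogT, e3, e5, e7, e9, e11, e13]
  rw [abs_le] at hA2 hB2 ⊢
  constructor
  · rw [show (2:ℝ)/(k*(k+1)^14) = 1/(k*(k+1)^14) + 1/(k*(k+1)^14) by ring]
    linarith [hA2.1, hB2.1, hA2.2, hB2.2]
  · rw [show (2:ℝ)/(k*(k+1)^14) = 1/(k*(k+1)^14) + 1/(k*(k+1)^14) by ring]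
    linarith [hA2.1, hB2.1, hA2.2, hB2.2]
noncomputable def Fm (n : ℕ) : ℝ :=
  19 / (25200 * ((n * (n + 1) : ℝ) / 2) ^ 3) -
    ((harmonic n : ℝ) -
      ((1 / 2) * Real.log (2 * ((n * (n + 1) : ℝ) / 2)) + Real.eulerMascheroniConstant +
        1 / (12 * ((n * (n + 1) : ℝ) / 2) + 6 / 5)))

noncomputable def gb (n : ℕ) : ℝ := 43 / (84000 * ((n * (n + 1) : ℝ) / 2) ^ 4)

private lemma step (n : ℕ) (hn : 1 ≤ n) :
    Fm (n + 1) < Fm n ∧ Fm n - gb n < Fm (n + 1) - gb (n + 1) := by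
  have hk : (1:ℝ) ≤ (n:ℝ) := by exact_mod_cast hn
  have hk0 : (0:ℝ) < (n:ℝ) := by linarith
  have hk1 : (0:ℝ) < (n:ℝ) + 1 := by linarith
  have hk2 : (0:ℝ) < (n:ℝ) + 2 := by linarith
  have hq1 : (0:ℝ) < 12 * ((n:ℝ) * ((n:ℝ)+1) / 2) + 6/5 := by nlinarith
  have hq2 : (0:ℝ) < 12 * (((n:ℝ)+1) * ((n:ℝ)+2) / 2) + 6/5 := by nlinarith
  have hharm : (harmonic (n+1) : ℝ) = (harmonic n : ℝ) + 1/((n:ℝ)+1) := by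
    push_cast [harmonic_succ]
    ring
  have hlog1 : Real.log (2 * ((n:ℝ) * ((n:ℝ) + 1) / 2))
      = Real.log (n:ℝ) + Real.log ((n:ℝ)+1) := by
    rw [show 2 * ((n:ℝ) * ((n:ℝ) + 1) / 2) = (n:ℝ) * ((n:ℝ)+1) by ring,
      Real.log_mul hk0.ne' hk1.ne']
  have hlog2 : Real.log (2 * (((n:ℝ)+1) * ((n:ℝ) + 1 + 1) / 2))
      = Real.log ((n:ℝ)+1) + Real.log ((n:ℝ)+2) := by
    rw [show 2 * (((n:ℝ)+1) * ((n:ℝ) + 1 + 1) / 2) = ((n:ℝ)+1) * ((n:ℝ)+2) by ring,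
      Real.log_mul hk1.ne' hk2.ne']
  have hdiff : Fm n - Fm (n+1) = 1/((n:ℝ)+1)
      - (1/2) * (Real.log ((n:ℝ)+2) - Real.log (n:ℝ))
      - (1/(12*(((n:ℝ)+1)*((n:ℝ)+2)/2) + 6/5) - 1/(12*((n:ℝ)*((n:ℝ)+1)/2) + 6/5))
      + 19/25200 * (1/((n:ℝ)*((n:ℝ)+1)/2)^3 - 1/(((n:ℝ)+1)*((n:ℝ)+2)/2)^3) := by
    simp only [Fm]
    rw [hharm]
    push_cast
    rw [hlog1, hlog2]
    field_simp
    ring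
  have hgb : gb n - gb (n+1)
      = 43/84000 * (1/((n:ℝ)*((n:ℝ)+1)/2)^4 - 1/(((n:ℝ)+1)*((n:ℝ)+2)/2)^4) := by
    simp only [gb]
    push_cast
    field_simp
    ring
  have hlb := log_bound (n:ℝ) hk
  rw [Real.log_div hk2.ne' hk0.ne', abs_le,
    show (2:ℝ)/((n:ℝ)*((n:ℝ)+1)^14)
      = 1/((n:ℝ)*((n:ℝ)+1)^14) + 1/((n:ℝ)*((n:ℝ)+1)^14) by ring] at hlb
  have hlow := rat_low (n:ℝ) hk
  have hupp := rat_upp (n:ℝ) hk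
  constructor
  · rw [← sub_pos, hdiff]
    linarith [hlb.1, hlb.2]
  · rw [← sub_pos, show Fm (n+1) - gb (n+1) - (Fm n - gb n)
      = (gb n - gb (n+1)) - (Fm n - Fm (n+1)) by ring, hdiff, hgb, sub_pos]
    linarith [hlb.1, hlb.2]

private lemma Fm_anti (a b : ℕ) (ha : 1 ≤ a) (hab : a ≤ b) : Fm b ≤ Fm a := by
  induction b, hab using Nat.le_induction with
  | base => exact le_rfl
  | succ m hm ih => exact ((step m (ha.trans hm)).1.le).trans ih

private lemma Fm_gb_mono (a b : ℕ) (ha : 1 ≤ a) (hab : a ≤ b) :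
    Fm a - gb a ≤ Fm b - gb b := by
  induction b, hab using Nat.le_induction with
  | base => exact le_rfl
  | succ m hm ih => exact ih.trans (step m (ha.trans hm)).2.le

private lemma tendsto_m : Tendsto (fun n : ℕ => ((n * (n + 1) : ℝ) / 2)) atTop atTop := by
  apply tendsto_atTop_mono' atTop ?_ tendsto_natCast_atTop_atTop
  filter_upwards [eventually_ge_atTop 1] with n hn
  have h1 : (1:ℝ) ≤ (n:ℝ) := by exact_mod_cast hn
  nlinarith

private lemma tendsto_gb : Tendsto gb atTop (𝓝 0) := by
  have h4 : Tendsto (fun n : ℕ => 84000 * ((n * (n + 1) : ℝ) / 2) ^ 4) atTop atTop :=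
    ((tendsto_pow_atTop (by norm_num : (4:ℕ) ≠ 0)).comp tendsto_m).const_mul_atTop
      (by norm_num)
  have h5 := (h4.inv_tendsto_atTop).const_mul (43:ℝ)
  simp only [mul_zero] at h5
  show Tendsto (fun n => gb n) atTop (𝓝 0)
  simpa only [gb, div_eq_mul_inv, Pi.inv_apply] using h5

private lemma tendsto_Fm : Tendsto Fm atTop (𝓝 0) := by
  have hc3 : Tendsto (fun n : ℕ => 19 / (25200 * ((n * (n + 1) : ℝ) / 2) ^ 3)) atTop (𝓝 0) := by
    have h4 : Tendsto (fun n : ℕ => 25200 * ((n * (n + 1) : ℝ) / 2) ^ 3) atTop atTop :=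
      ((tendsto_pow_atTop (by norm_num : (3:ℕ) ≠ 0)).comp tendsto_m).const_mul_atTop
        (by norm_num)
    have h5 := (h4.inv_tendsto_atTop).const_mul (19:ℝ)
    simp only [mul_zero] at h5
    simpa only [div_eq_mul_inv, Pi.inv_apply] using h5
  have hc1 : Tendsto (fun n : ℕ => 1 / (12 * ((n * (n + 1) : ℝ) / 2) + 6/5)) atTop (𝓝 0) := by
    have h4 : Tendsto (fun n : ℕ => 12 * ((n * (n + 1) : ℝ) / 2) + 6/5) atTop atTop :=
      tendsto_atTop_add_const_right _ _ (tendsto_m.const_mul_atTop (by norm_num))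
    have h5 := h4.inv_tendsto_atTop
    simpa only [div_eq_mul_inv, one_mul, Pi.inv_def] using h5
  have hγ : Tendsto (fun n : ℕ => -(((harmonic n : ℝ) - Real.log n)
      - Real.eulerMascheroniConstant)) atTop (𝓝 0) := by
    have := (Real.tendsto_harmonic_sub_log.sub_const Real.eulerMascheroniConstant).neg
    simpa using this
  have hlogr : Tendsto (fun n : ℕ => (1/2) * Real.log (((n:ℝ)+1)/(n:ℝ))) atTop (𝓝 0) := by
    have h0 : Tendsto (fun n : ℕ => 1 + 1/(n:ℝ)) atTop (𝓝 1) := by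
      have := tendsto_one_div_atTop_nhds_zero_nat.const_add (1:ℝ)
      simpa using this
    have h1 : Tendsto (fun n : ℕ => ((n:ℝ)+1)/(n:ℝ)) atTop (𝓝 1) := by
      apply Tendsto.congr' ?_ h0
      filter_upwards [eventually_ge_atTop 1] with n hn
      have hne : (n:ℝ) ≠ 0 := Nat.cast_ne_zero.mpr (by omega)
      field_simp
    have h2 := (h1.log one_ne_zero).const_mul (1/2 : ℝ)
    simpa using h2
  have hsum := ((hγ.add hlogr).add hc3).add hc1
  rw [show ((0:ℝ) + 0 + 0 + 0) = 0 by norm_num] at hsum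
  apply Tendsto.congr' ?_ hsum
  filter_upwards [eventually_ge_atTop 1] with n hn
  have hk : (1:ℝ) ≤ (n:ℝ) := by exact_mod_cast hn
  have hk0 : (0:ℝ) < (n:ℝ) := by linarith
  have hk1 : (0:ℝ) < (n:ℝ) + 1 := by linarith
  have hlog1 : Real.log (2 * ((n * (n + 1) : ℝ) / 2))
      = Real.log (n:ℝ) + Real.log ((n:ℝ)+1) := by
    rw [show 2 * ((n * (n + 1) : ℝ) / 2) = (n:ℝ) * ((n:ℝ)+1) by push_cast; ring,
      Real.log_mul hk0.ne' hk1.ne']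
  have hlog2 : Real.log (((n:ℝ)+1)/(n:ℝ)) = Real.log ((n:ℝ)+1) - Real.log (n:ℝ) :=
    Real.log_div hk1.ne' hk0.ne'
  simp only [Fm]
  rw [hlog1, hlog2]
  ring

theorem lodge_lambda_refined (n : ℕ) (hn : 1 ≤ n) :
    ∃ ρ : ℝ, 0 < ρ ∧ ρ < 43 / (84000 * ((n * (n + 1) : ℝ) / 2) ^ 4) ∧
      (harmonic n : ℝ) -
          ((1 / 2) * Real.log (2 * ((n * (n + 1) : ℝ) / 2)) + Real.eulerMascheroniConstant +
            1 / (12 * ((n * (n + 1) : ℝ) / 2) + 6 / 5)) =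
        19 / (25200 * ((n * (n + 1) : ℝ) / 2) ^ 3) - ρ := by
  refine ⟨Fm n, ?_, ?_, ?_⟩
  · have h1 : (0:ℝ) ≤ Fm (n+1) := by
      apply le_of_tendsto tendsto_Fm
      filter_upwards [eventually_ge_atTop (n+1)] with b hb
      exact Fm_anti (n+1) b (by omega) hb
    have := (step n hn).1
    linarith
  · have h2 : Fm (n+1) - gb (n+1) ≤ 0 := by
      refine ge_of_tendsto (x := (atTop : Filter ℕ)) (f := fun b => Fm b - gb b) ?_ ?_
      · simpa using tendsto_Fm.sub tendsto_gb
      · filter_upwards [eventually_ge_atTop (n+1)] with b hb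
        exact Fm_gb_mono (n+1) b (by omega) hb
    have h3 := (step n hn).2
    have h4 : Fm n < gb n := by linarith
    simpa only [gb] using h4
  · simp only [Fm]
    ring
end

section
/- For every natural number n ≥ 1, the inequality 1/(6n(n+1) + 6/5) < H_n − ln(√(n(n+1))) − γ ≤ 1/(6n(n+1) + 1/(1 − γ − ln√2) − 12) holds, with equality on the right only for n = 1. -/
set_option maxHeartbeats 2000000

open Real Finset Filter Topology

namespace RamanujanLodge

lemma log_ratio_bounds (x : ℝ) (h0 : 0 ≤ x) (h1 : x ≤ 1/2) :
    |Real.log (1+x) - Real.log (1-x) -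
      2*(x + x^3/3 + x^5/5 + x^7/7 + x^9/9 + x^11/11)| ≤ 2*x^13/(1-x) := by
  have hax : |x| < 1 := by rw [abs_of_nonneg h0]; linarith
  have hax' : |(-x)| < 1 := by rwa [abs_neg]
  have h₁ := Real.abs_log_sub_add_sum_range_le hax 12
  have h₂ := Real.abs_log_sub_add_sum_range_le hax' 12
  rw [abs_of_nonneg h0] at h₁
  rw [abs_neg, abs_of_nonneg h0] at h₂
  simp only [Finset.sum_range_succ, Finset.sum_range_zero] at h₁ h₂
  have e2 : (1 : ℝ) - -x = 1 + x := by ring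
  rw [e2] at h₂
  rw [abs_le] at h₁ h₂ ⊢
  norm_num at h₁ h₂
  ring_nf at h₁ h₂ ⊢
  constructor <;> [linarith [h₁.1, h₁.2, h₂.1, h₂.2]; linarith [h₁.1, h₁.2, h₂.1, h₂.2]]

lemma key_lower (x : ℝ) (hx : 0 < x) (h1 : x ≤ 1/2) :
    (1/6)*(x^2/(1 - x + x^2/5) - x^2/(1 + x + x^2/5)) <
      (1/2)*(Real.log (1+x) - Real.log (1-x)) - x := by
  have h0 := hx.le
  have hlog := (abs_le.1 (log_ratio_bounds x h0 h1)).1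
  have hD1 : (0:ℝ) < 1 - x + x^2/5 := by nlinarith
  have hD2 : (0:ℝ) < 1 + x + x^2/5 := by nlinarith
  have h1x : (0:ℝ) < 1 - x := by linarith
  have hQ : x^3/3 + x^5/5 + x^7/7 + x^9/9 + x^11/11 - x^13/(1-x) ≤
      (1/2)*(Real.log (1+x) - Real.log (1-x)) - x := by
    have hrem : 2*x^13/(1-x) = 2*(x^13/(1-x)) := by ring
    linarith [hlog, hrem.le, hrem.ge]
  have hr : (0:ℝ) < 19/525 - 68/875*x^2 + x^4/175 := by nlinarith
  have hphi : (0:ℝ) ≤ (1-x)*(1/9 + x^2/11) - x^4 := by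
    nlinarith [mul_nonneg (sub_nonneg.2 h1) (pow_nonneg h0 2),
      mul_nonneg (sub_nonneg.2 h1) (pow_nonneg h0 3),
      mul_nonneg (sub_nonneg.2 h1) h0, sq_nonneg x]
  have hW : (0:ℝ) < (1 - x + x^2/5)*(1 + x + x^2/5) := mul_pos hD1 hD2
  have hnum : (0:ℝ) < (1-x)*(x^7)*(19/525 - 68/875*x^2 + x^4/175)
      + x^9*((1 - x + x^2/5)*(1 + x + x^2/5))*((1-x)*(1/9 + x^2/11) - x^4) := by
    have p1 := mul_pos (mul_pos h1x (pow_pos hx 7)) hr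
    have p2 := mul_nonneg (mul_nonneg (pow_nonneg h0 9) hW.le) hphi
    linarith
  have iden : x^3/3 + x^5/5 + x^7/7 + x^9/9 + x^11/11 - x^13/(1-x)
      - (1/6)*(x^2/(1 - x + x^2/5) - x^2/(1 + x + x^2/5))
      = ((1-x)*(x^7)*(19/525 - 68/875*x^2 + x^4/175)
        + x^9*((1 - x + x^2/5)*(1 + x + x^2/5))*((1-x)*(1/9 + x^2/11) - x^4))
        / ((1-x)*((1 - x + x^2/5)*(1 + x + x^2/5))) := by
    field_simp
    ring
  have := div_pos hnum (by positivity : (0:ℝ) < (1-x)*((1 - x + x^2/5)*(1 + x + x^2/5)))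
  linarith [iden ▸ this]

lemma key_upper (x : ℝ) (hx : 0 < x) (h3 : x ≤ 1/3) :
    (1/2)*(Real.log (1+x) - Real.log (1-x)) - x ≤
      (1/6)*(x^2/(1 - x + 23/120*x^2) - x^2/(1 + x + 23/120*x^2)) := by
  have h0 := hx.le
  have h1 : x ≤ 1/2 := by linarith
  have hlog := (abs_le.1 (log_ratio_bounds x h0 h1)).2
  have hD1 : (0:ℝ) < 1 - x + 23/120*x^2 := by nlinarith
  have hD2 : (0:ℝ) < 1 + x + 23/120*x^2 := by nlinarith
  have h1x : (0:ℝ) < 1 - x := by linarith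
  have hQ : (1/2)*(Real.log (1+x) - Real.log (1-x)) - x ≤
      x^3/3 + x^5/5 + x^7/7 + x^9/9 + x^11/11 + x^13/(1-x) := by
    have hrem : 2*x^13/(1-x) = 2*(x^13/(1-x)) := by ring
    linarith [hlog, hrem.le, hrem.ge]
  have hT1 : (0:ℝ) ≤ 1 + (-(1351499/1425600) - 74101/1425600*x + 97151/158400*x^2
      + 529/158400*x^3 - 529/14400*x^4) := by
    nlinarith [pow_nonneg h0 2, pow_nonneg h0 3, pow_nonneg h0 4,
      mul_nonneg (sub_nonneg.2 h3) (pow_nonneg h0 3), mul_nonneg (sub_nonneg.2 h3) h0]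
  have hP1 : (0:ℝ) ≤ (1-x)*(1/180 - 9607/302400*x^2 - 5101/168000*x^4 - 91937/3326400*x^6)
      - x^8 := by
    nlinarith [mul_nonneg (sub_nonneg.2 h3) h0, mul_nonneg (sub_nonneg.2 h3) (pow_nonneg h0 2),
      mul_nonneg (sub_nonneg.2 h3) (pow_nonneg h0 3), mul_nonneg (sub_nonneg.2 h3) (pow_nonneg h0 4),
      mul_nonneg (sub_nonneg.2 h3) (pow_nonneg h0 5), mul_nonneg (sub_nonneg.2 h3) (pow_nonneg h0 6),
      mul_nonneg (sub_nonneg.2 h3) (pow_nonneg h0 7), pow_nonneg h0 8]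
  have hnum : (0:ℝ) ≤ x^5*((1-x)*(1/180 - 9607/302400*x^2 - 5101/168000*x^4 - 91937/3326400*x^6) - x^8)
      + x^13*(1 + (-(1351499/1425600) - 74101/1425600*x + 97151/158400*x^2
      + 529/158400*x^3 - 529/14400*x^4)) := by
    have p1 := mul_nonneg (pow_nonneg h0 5) hP1
    have p2 := mul_nonneg (pow_nonneg h0 13) hT1
    linarith
  have iden : (1/6)*(x^2/(1 - x + 23/120*x^2) - x^2/(1 + x + 23/120*x^2))
      - (x^3/3 + x^5/5 + x^7/7 + x^9/9 + x^11/11 + x^13/(1-x))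
      = (x^5*((1-x)*(1/180 - 9607/302400*x^2 - 5101/168000*x^4 - 91937/3326400*x^6) - x^8)
      + x^13*(1 + (-(1351499/1425600) - 74101/1425600*x + 97151/158400*x^2
      + 529/158400*x^3 - 529/14400*x^4)))
        / ((1-x)*((1 - x + 23/120*x^2)*(1 + x + 23/120*x^2))) := by
    field_simp
    ring
  have := div_nonneg hnum (by positivity : (0:ℝ) ≤ (1-x)*((1 - x + 23/120*x^2)*(1 + x + 23/120*x^2)))
  linarith [iden ▸ this]

noncomputable def dd (n : ℕ) : ℝ :=
  (harmonic n : ℝ) - Real.log ((n:ℝ)*((n:ℝ)+1)) / 2 - Real.eulerMascheroniConstant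

noncomputable def Lo (n : ℕ) : ℝ := (1/6) / ((n:ℝ)*((n:ℝ)+1) + 1/5)

noncomputable def Hi (n : ℕ) : ℝ := (1/6) / ((n:ℝ)*((n:ℝ)+1) + 23/120)

lemma dd_step (k : ℕ) (hk : 1 ≤ k) :
    dd k - dd (k+1) =
      (1/2)*(Real.log (1 + 1/((k:ℝ)+1)) - Real.log (1 - 1/((k:ℝ)+1))) - 1/((k:ℝ)+1) := by
  have hk0 : (0:ℝ) < (k:ℝ) := by exact_mod_cast hk
  have hk1 : (0:ℝ) < (k:ℝ)+1 := by linarith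
  have hk2 : (0:ℝ) < (k:ℝ)+2 := by linarith
  have e1 : (1:ℝ) + 1/((k:ℝ)+1) = ((k:ℝ)+2)/((k:ℝ)+1) := by field_simp; ring
  have e2 : (1:ℝ) - 1/((k:ℝ)+1) = (k:ℝ)/((k:ℝ)+1) := by field_simp; ring
  simp only [dd]
  push_cast [harmonic_succ]
  rw [e1, e2, Real.log_div hk2.ne' hk1.ne', Real.log_div hk0.ne' hk1.ne',
    show ((k:ℝ)+1)*((k:ℝ)+1+1) = ((k:ℝ)+1)*((k:ℝ)+2) by ring,
    Real.log_mul hk0.ne' hk1.ne', Real.log_mul hk1.ne' hk2.ne']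
  ring

lemma lo_eq (k : ℕ) (hk : 1 ≤ k) :
    (1/6)*((1/((k:ℝ)+1))^2/(1 - 1/((k:ℝ)+1) + (1/((k:ℝ)+1))^2/5)
      - (1/((k:ℝ)+1))^2/(1 + 1/((k:ℝ)+1) + (1/((k:ℝ)+1))^2/5)) = Lo k - Lo (k+1) := by
  have hk0 : (0:ℝ) < (k:ℝ) := by exact_mod_cast hk
  have hk1 : (0:ℝ) < (k:ℝ)+1 := by linarith
  have hd1 : (k:ℝ)*((k:ℝ)+1) + 1/5 ≠ 0 := by positivity
  have hd2 : ((k:ℝ)+1)*((k:ℝ)+1+1) + 1/5 ≠ 0 := by positivity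
  have hD1 : 1 - 1/((k:ℝ)+1) + (1/((k:ℝ)+1))^2/5 ≠ 0 := by
    have : (0:ℝ) < 1 - 1/((k:ℝ)+1) := by
      rw [sub_pos, div_lt_one hk1]; linarith
    positivity
  have hD2 : 1 + 1/((k:ℝ)+1) + (1/((k:ℝ)+1))^2/5 ≠ 0 := by positivity
  simp only [Lo]
  push_cast
  field_simp
  ring_nf
  field_simp
  ring

lemma hi_eq (k : ℕ) (hk : 1 ≤ k) :
    (1/6)*((1/((k:ℝ)+1))^2/(1 - 1/((k:ℝ)+1) + 23/120*(1/((k:ℝ)+1))^2)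
      - (1/((k:ℝ)+1))^2/(1 + 1/((k:ℝ)+1) + 23/120*(1/((k:ℝ)+1))^2)) = Hi k - Hi (k+1) := by
  have hk0 : (0:ℝ) < (k:ℝ) := by exact_mod_cast hk
  have hk1 : (0:ℝ) < (k:ℝ)+1 := by linarith
  have hd1 : (k:ℝ)*((k:ℝ)+1) + 23/120 ≠ 0 := by positivity
  have hd2 : ((k:ℝ)+1)*((k:ℝ)+1+1) + 23/120 ≠ 0 := by positivity
  have hD1 : 1 - 1/((k:ℝ)+1) + 23/120*(1/((k:ℝ)+1))^2 ≠ 0 := by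
    have : (0:ℝ) < 1 - 1/((k:ℝ)+1) := by
      rw [sub_pos, div_lt_one hk1]; linarith
    positivity
  have hD2 : 1 + 1/((k:ℝ)+1) + 23/120*(1/((k:ℝ)+1))^2 ≠ 0 := by positivity
  simp only [Hi]
  push_cast
  field_simp
  ring_nf
  field_simp
  ring

lemma step_lo (k : ℕ) (hk : 1 ≤ k) : Lo k - Lo (k+1) < dd k - dd (k+1) := by
  have hk1 : (0:ℝ) < (k:ℝ)+1 := by positivity
  have hx : (0:ℝ) < 1/((k:ℝ)+1) := by positivity
  have h2 : (2:ℝ) ≤ (k:ℝ)+1 := by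
    have : (1:ℝ) ≤ (k:ℝ) := by exact_mod_cast hk
    linarith
  have hhalf : 1/((k:ℝ)+1) ≤ 1/2 := by
    apply one_div_le_one_div_of_le <;> linarith
  rw [dd_step k hk, ← lo_eq k hk]
  exact key_lower _ hx hhalf

lemma step_hi (k : ℕ) (hk : 2 ≤ k) : dd k - dd (k+1) ≤ Hi k - Hi (k+1) := by
  have hk1 : (0:ℝ) < (k:ℝ)+1 := by positivity
  have hx : (0:ℝ) < 1/((k:ℝ)+1) := by positivity
  have h3 : (3:ℝ) ≤ (k:ℝ)+1 := by
    have : (2:ℝ) ≤ (k:ℝ) := by exact_mod_cast hk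
    linarith
  have hthird : 1/((k:ℝ)+1) ≤ 1/3 := by
    apply one_div_le_one_div_of_le <;> linarith
  rw [dd_step k (by omega), ← hi_eq k (by omega)]
  exact key_upper _ hx hthird

lemma dd_tendsto : Tendsto dd atTop (𝓝 0) := by
  have h1 := Real.tendsto_eulerMascheroniSeq
  have h2 := Real.tendsto_eulerMascheroniSeq'
  have key : Tendsto (fun n => (Real.eulerMascheroniSeq n - Real.eulerMascheroniConstant)
      + (Real.eulerMascheroniSeq' n - Real.eulerMascheroniSeq n)/2) atTop (𝓝 0) := by
    have := (h1.sub_const Real.eulerMascheroniConstant).add ((h2.sub h1).div_const 2)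
    simpa using this
  apply key.congr'
  filter_upwards [eventually_ge_atTop 1] with n hn
  have hn0 : n ≠ 0 := by omega
  have hn0' : (0:ℝ) < (n:ℝ) := by exact_mod_cast Nat.pos_of_ne_zero hn0
  simp only [dd, Real.eulerMascheroniSeq, Real.eulerMascheroniSeq', if_neg hn0]
  rw [Real.log_mul hn0'.ne' (by linarith)]
  ring

lemma Lo_tendsto : Tendsto Lo atTop (𝓝 0) := by
  apply squeeze_zero' (g := fun n : ℕ => 1/(n:ℝ))
  · filter_upwards with n
    have : (0:ℝ) ≤ (n:ℝ) := n.cast_nonneg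
    simp only [Lo]; positivity
  · filter_upwards [eventually_ge_atTop 1] with n hn
    have h1 : (1:ℝ) ≤ (n:ℝ) := by exact_mod_cast hn
    simp only [Lo]
    rw [div_le_div_iff₀ (by nlinarith) (by linarith)]
    nlinarith
  · exact tendsto_one_div_atTop_nhds_zero_nat

lemma Hi_tendsto : Tendsto Hi atTop (𝓝 0) := by
  apply squeeze_zero' (g := fun n : ℕ => 1/(n:ℝ))
  · filter_upwards with n
    have : (0:ℝ) ≤ (n:ℝ) := n.cast_nonneg
    simp only [Hi]; positivity
  · filter_upwards [eventually_ge_atTop 1] with n hn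
    have h1 : (1:ℝ) ≤ (n:ℝ) := by exact_mod_cast hn
    simp only [Hi]
    rw [div_le_div_iff₀ (by nlinarith) (by linarith)]
    nlinarith
  · exact tendsto_one_div_atTop_nhds_zero_nat

lemma dd_ge_Lo (n : ℕ) (hn : 1 ≤ n) : Lo n ≤ dd n := by
  have tele : ∀ m : ℕ, Lo n - Lo (n+m) ≤ dd n - dd (n+m) := by
    intro m
    induction m with
    | zero => simp
    | succ m ih =>
      have hstep := step_lo (n+m) (le_trans hn (Nat.le_add_right n m))
      have e : n + (m+1) = (n+m)+1 := rfl
      rw [e]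
      linarith [hstep.le]
  have hmono : Tendsto (fun m : ℕ => n + m) atTop atTop :=
    tendsto_atTop_mono (fun m => Nat.le_add_left m n) tendsto_id
  have t1 : Tendsto (fun m => Lo n - Lo (n+m)) atTop (𝓝 (Lo n)) := by
    simpa using tendsto_const_nhds.sub (Lo_tendsto.comp hmono)
  have t2 : Tendsto (fun m => dd n - dd (n+m)) atTop (𝓝 (dd n)) := by
    simpa using tendsto_const_nhds.sub (dd_tendsto.comp hmono)
  exact le_of_tendsto_of_tendsto' t1 t2 tele

lemma dd_le_Hi (n : ℕ) (hn : 2 ≤ n) : dd n ≤ Hi n := by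
  have tele : ∀ m : ℕ, dd n - dd (n+m) ≤ Hi n - Hi (n+m) := by
    intro m
    induction m with
    | zero => simp
    | succ m ih =>
      have hstep := step_hi (n+m) (le_trans hn (Nat.le_add_right n m))
      have e : n + (m+1) = (n+m)+1 := rfl
      rw [e]
      linarith
  have hmono : Tendsto (fun m : ℕ => n + m) atTop atTop :=
    tendsto_atTop_mono (fun m => Nat.le_add_left m n) tendsto_id
  have t1 : Tendsto (fun m => Hi n - Hi (n+m)) atTop (𝓝 (Hi n)) := by
    simpa using tendsto_const_nhds.sub (Hi_tendsto.comp hmono)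
  have t2 : Tendsto (fun m => dd n - dd (n+m)) atTop (𝓝 (dd n)) := by
    simpa using tendsto_const_nhds.sub (dd_tendsto.comp hmono)
  exact le_of_tendsto_of_tendsto' t2 t1 tele

lemma dd_gt_Lo (n : ℕ) (hn : 1 ≤ n) : Lo n < dd n := by
  have h1 := step_lo n hn
  have h2 := dd_ge_Lo (n+1) (by omega)
  linarith

lemma log_three_lb : (1.09858 : ℝ) ≤ Real.log 3 := by
  have h := Real.abs_log_sub_add_sum_range_le (x := 1/2) (by rw [abs_of_nonneg] <;> norm_num) 16
  have h' := Real.abs_log_sub_add_sum_range_le (x := -(1/2)) (by rw [abs_neg, abs_of_nonneg] <;> norm_num) 16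
  have e3 : (1:ℝ) - -(1/2) = 3/2 := by norm_num
  have e2 : (1:ℝ) - 1/2 = 1/2 := by norm_num
  rw [e3] at h'
  rw [e2] at h
  have l3 : Real.log (3/2) - Real.log (1/2) = Real.log 3 := by
    rw [← Real.log_div (by norm_num) (by norm_num)]; norm_num
  simp only [Finset.sum_range_succ, Finset.sum_range_zero] at h h'
  rw [abs_le] at h h'
  norm_num [abs_of_nonneg] at h h'
  linarith [h.1, h.2, h'.1, h'.2, l3]

lemma dd1_gt : (20/263 : ℝ) < dd 1 := by
  have hb := dd_step 1 le_rfl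
  have h2 := dd_ge_Lo 2 (by norm_num)
  have hLo2 : Lo 2 = 5/186 := by
    simp only [Lo]; norm_num
  norm_num at hb
  have l3 : Real.log (3/2) - Real.log (1/2) = Real.log 3 := by
    rw [← Real.log_div (by norm_num) (by norm_num)]; norm_num
  linarith [log_three_lb]

lemma dd1_pos : (0:ℝ) < dd 1 := lt_trans (by norm_num) dd1_gt

end RamanujanLodge

open RamanujanLodge

theorem ramanujan_lodge_sharp (n : ℕ) (hn : 1 ≤ n) :
    (1 / (6 * n * (n + 1) + 6 / 5) <
        (harmonic n : ℝ) - Real.log (Real.sqrt (n * (n + 1))) -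
          Real.eulerMascheroniConstant ∧
      (harmonic n : ℝ) - Real.log (Real.sqrt (n * (n + 1))) -
          Real.eulerMascheroniConstant ≤
        1 / (6 * n * (n + 1) +
          1 / (1 - Real.eulerMascheroniConstant - Real.log (Real.sqrt 2)) - 12)) ∧
    ((harmonic n : ℝ) - Real.log (Real.sqrt (n * (n + 1))) -
          Real.eulerMascheroniConstant =
        1 / (6 * n * (n + 1) +
          1 / (1 - Real.eulerMascheroniConstant - Real.log (Real.sqrt 2)) - 12) ↔
      n = 1) := by
  have hn1 : (1:ℝ) ≤ (n:ℝ) := by exact_mod_cast hn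
  have hmpos : (0:ℝ) < (n:ℝ)*((n:ℝ)+1) := by nlinarith
  have hsq : Real.log (Real.sqrt ((n:ℝ) * ((n:ℝ) + 1))) = Real.log ((n:ℝ)*((n:ℝ)+1))/2 :=
    Real.log_sqrt hmpos.le
  have hsq2 : Real.log (Real.sqrt 2) = Real.log 2 / 2 := Real.log_sqrt (by norm_num)
  have hh1 : (harmonic 1 : ℝ) = 1 := by
    norm_num [harmonic_succ, harmonic_zero]
  have hdd1 : 1 - Real.eulerMascheroniConstant - Real.log (Real.sqrt 2) = dd 1 := by
    have e2 : ((1:ℕ):ℝ)*(((1:ℕ):ℝ)+1) = 2 := by norm_num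
    simp only [dd, hsq2, hh1, e2]
    ring
  have hddn : (harmonic n : ℝ) - Real.log (Real.sqrt ((n:ℝ) * ((n:ℝ) + 1))) -
      Real.eulerMascheroniConstant = dd n := by
    rw [hsq]; rfl
  rw [hddn, hdd1]
  have hd1pos := dd1_pos
  have hc : 1/(dd 1) < 263/20 := by
    have := one_div_lt_one_div_of_lt (by norm_num : (0:ℝ) < 20/263) dd1_gt
    calc 1/(dd 1) < 1/(20/263) := this
    _ = 263/20 := by norm_num
  -- lower bound
  have hLo := dd_gt_Lo n hn
  have hLo_eq : Lo n = 1/(6*(n:ℝ)*((n:ℝ)+1) + 6/5) := by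
    simp only [Lo]
    rw [div_eq_div_iff (by positivity) (by positivity)]
    ring
  have hlower : 1 / (6 * (n:ℝ) * ((n:ℝ) + 1) + 6 / 5) < dd n := by
    rw [← hLo_eq]; exact hLo
  rcases eq_or_lt_of_le hn with h1 | h2
  · -- n = 1
    have hn1' : n = 1 := h1.symm
    subst hn1'
    have e12 : (6:ℝ) * (1:ℕ) * ((1:ℕ) + 1) + 1 / dd 1 - 12 = 1/dd 1 := by
      push_cast; ring
    rw [e12, one_div_one_div]
    exact ⟨⟨hlower, le_rfl⟩, by simp⟩
  · -- n ≥ 2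
    have hn2 : 2 ≤ n := h2
    have hn2R : (2:ℝ) ≤ (n:ℝ) := by exact_mod_cast hn2
    have hHi := dd_le_Hi n hn2
    have hHi_eq : Hi n = 1/(6*(n:ℝ)*((n:ℝ)+1) + 23/20) := by
      simp only [Hi]
      rw [div_eq_div_iff (by positivity) (by positivity)]
      ring
    have hden : (0:ℝ) < 6*(n:ℝ)*((n:ℝ)+1) + 1/(dd 1) - 12 := by
      have h1d : (0:ℝ) < 1/(dd 1) := by positivity
      nlinarith
    have hstrict : dd n < 1/(6*(n:ℝ)*((n:ℝ)+1) + 1/(dd 1) - 12) := by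
      have hlt : 1/(6*(n:ℝ)*((n:ℝ)+1) + 23/20) < 1/(6*(n:ℝ)*((n:ℝ)+1) + 1/(dd 1) - 12) := by
        apply one_div_lt_one_div_of_lt hden
        linarith
      calc dd n ≤ Hi n := hHi
      _ = 1/(6*(n:ℝ)*((n:ℝ)+1) + 23/20) := hHi_eq
      _ < _ := hlt
    refine ⟨⟨hlower, hstrict.le⟩, ?_⟩
    constructor
    · intro heq
      exact absurd heq hstrict.ne
    · intro h; omega
end

section
/- For every natural number n ≥ 1, define f_n by H_n = ln n + γ + 1/(2n + f_n). Then the sequence {f_n} is strictly monotonically decreasing. -/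
open Real Filter Topology

noncomputable def Aa (x : ℝ) : ℝ := 3 / (6 * x + 1) - 8 / (9 * (4 * x + 1) ^ 3)

noncomputable def aseq (n : ℕ) : ℝ :=
  (harmonic n : ℝ) - Real.log n - Real.eulerMascheroniConstant

lemma log_ge (x : ℝ) (hx : 0 ≤ x) :
    x - x^2/2 + x^3/3 - x^4/4 + x^5/5 - x^6/6 + x^7/7 - x^8/8 + x^9/9 - x^10/10
      ≤ Real.log (1 + x) := by
  set F : ℝ → ℝ := fun t => Real.log (1 + t) -
    (t - t^2/2 + t^3/3 - t^4/4 + t^5/5 - t^6/6 + t^7/7 - t^8/8 + t^9/9 - t^10/10) with hFdef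
  have hder : ∀ t : ℝ, 0 ≤ t → HasDerivAt F (t^10 / (1 + t)) t := by
    intro t ht
    have h1 : (1:ℝ) + t ≠ 0 := by linarith
    have hlog : HasDerivAt (fun s : ℝ => Real.log (1 + s)) (1 / (1 + t)) t := by
      have := ((hasDerivAt_id' t).const_add 1).log h1
      simpa [one_div] using this
    have hpoly : HasDerivAt (fun s : ℝ =>
        s - s^2/2 + s^3/3 - s^4/4 + s^5/5 - s^6/6 + s^7/7 - s^8/8 + s^9/9 - s^10/10)
        (1 - t + t^2 - t^3 + t^4 - t^5 + t^6 - t^7 + t^8 - t^9) t := by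
      have h := (((((((((hasDerivAt_id t).sub ((hasDerivAt_pow 2 t).div_const 2)).add
        ((hasDerivAt_pow 3 t).div_const 3)).sub ((hasDerivAt_pow 4 t).div_const 4)).add
        ((hasDerivAt_pow 5 t).div_const 5)).sub ((hasDerivAt_pow 6 t).div_const 6)).add
        ((hasDerivAt_pow 7 t).div_const 7)).sub ((hasDerivAt_pow 8 t).div_const 8)).add
        ((hasDerivAt_pow 9 t).div_const 9)).sub ((hasDerivAt_pow 10 t).div_const 10)
      convert h using 1 <;> first | rfl | norm_num
    have h2 := hlog.sub hpoly
    convert h2 using 1 <;> first | rfl | (field_simp; ring)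
  have hmono : MonotoneOn F (Set.Ici (0:ℝ)) := by
    apply monotoneOn_of_deriv_nonneg (convex_Ici 0)
    · intro t ht
      exact (hder t ht).continuousAt.continuousWithinAt
    · intro t ht
      rw [interior_Ici] at ht
      exact (hder t (le_of_lt ht)).differentiableAt.differentiableWithinAt
    · intro t ht
      rw [interior_Ici] at ht
      rw [(hder t (le_of_lt ht)).deriv]
      have : (0:ℝ) < t := ht
      apply div_nonneg (by positivity) (by linarith)
  have h0 : F 0 ≤ F x := hmono Set.self_mem_Ici hx hx
  have hF0 : F 0 = 0 := by simp [hFdef]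
  rw [hF0] at h0
  simp only [hFdef] at h0
  linarith

lemma log_le (x : ℝ) (hx : 0 ≤ x) :
    Real.log (1 + x) ≤
      x - x^2/2 + x^3/3 - x^4/4 + x^5/5 - x^6/6 + x^7/7 - x^8/8 + x^9/9 - x^10/10 + x^11/11 := by
  set F : ℝ → ℝ := fun t =>
    (t - t^2/2 + t^3/3 - t^4/4 + t^5/5 - t^6/6 + t^7/7 - t^8/8 + t^9/9 - t^10/10 + t^11/11)
      - Real.log (1 + t) with hFdef
  have hder : ∀ t : ℝ, 0 ≤ t → HasDerivAt F (t^11 / (1 + t)) t := by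
    intro t ht
    have h1 : (1:ℝ) + t ≠ 0 := by linarith
    have hlog : HasDerivAt (fun s : ℝ => Real.log (1 + s)) (1 / (1 + t)) t := by
      have := ((hasDerivAt_id' t).const_add 1).log h1
      simpa [one_div] using this
    have hpoly : HasDerivAt (fun s : ℝ =>
        s - s^2/2 + s^3/3 - s^4/4 + s^5/5 - s^6/6 + s^7/7 - s^8/8 + s^9/9 - s^10/10 + s^11/11)
        (1 - t + t^2 - t^3 + t^4 - t^5 + t^6 - t^7 + t^8 - t^9 + t^10) t := by
      have h := ((((((((((hasDerivAt_id t).sub ((hasDerivAt_pow 2 t).div_const 2)).add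
        ((hasDerivAt_pow 3 t).div_const 3)).sub ((hasDerivAt_pow 4 t).div_const 4)).add
        ((hasDerivAt_pow 5 t).div_const 5)).sub ((hasDerivAt_pow 6 t).div_const 6)).add
        ((hasDerivAt_pow 7 t).div_const 7)).sub ((hasDerivAt_pow 8 t).div_const 8)).add
        ((hasDerivAt_pow 9 t).div_const 9)).sub ((hasDerivAt_pow 10 t).div_const 10)).add
        ((hasDerivAt_pow 11 t).div_const 11)
      convert h using 1 <;> first | rfl | norm_num
    have h2 := hpoly.sub hlog
    convert h2 using 1 <;> first | rfl | (field_simp; ring)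
  have hmono : MonotoneOn F (Set.Ici (0:ℝ)) := by
    apply monotoneOn_of_deriv_nonneg (convex_Ici 0)
    · intro t ht
      exact (hder t ht).continuousAt.continuousWithinAt
    · intro t ht
      rw [interior_Ici] at ht
      exact (hder t (le_of_lt ht)).differentiableAt.differentiableWithinAt
    · intro t ht
      rw [interior_Ici] at ht
      rw [(hder t (le_of_lt ht)).deriv]
      have : (0:ℝ) < t := ht
      apply div_nonneg (by positivity) (by linarith)
  have h0 : F 0 ≤ F x := hmono Set.self_mem_Ici hx hx
  have hF0 : F 0 = 0 := by simp [hFdef]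
  rw [hF0] at h0
  simp only [hFdef] at h0
  linarith

lemma cert1 {x : ℝ} (hx : 2 ≤ x) :
    Aa x - Aa (x + 1) ≤
      (1/x - (1/x)^2/2 + (1/x)^3/3 - (1/x)^4/4 + (1/x)^5/5 - (1/x)^6/6 + (1/x)^7/7
        - (1/x)^8/8 + (1/x)^9/9 - (1/x)^10/10) - 1/(x+1) := by
  have hx0 : (0:ℝ) < x := by linarith
  have h1 : (0:ℝ) < x + 1 := by linarith
  have h2 : (0:ℝ) < 6*x+1 := by linarith
  have h3 : (0:ℝ) < 6*x+7 := by linarith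
  have h4 : (0:ℝ) < 4*x+1 := by linarith
  have h5 : (0:ℝ) < 4*x+5 := by linarith
  rw [← sub_nonneg]
  have key : (1/x - (1/x)^2/2 + (1/x)^3/3 - (1/x)^4/4 + (1/x)^5/5 - (1/x)^6/6 + (1/x)^7/7
        - (1/x)^8/8 + (1/x)^9/9 - (1/x)^10/10) - 1/(x+1) - (Aa x - Aa (x + 1)) =
      (127261504968 + 1071806919140 * (x-2) + 3462237356569 * (x-2)^2 +
        6352548688359 * (x-2)^3 + 7687998538208 * (x-2)^4 + 6598657442416 * (x-2)^5 +
        4169914942266 * (x-2)^6 + 1974087018662 * (x-2)^7 + 702464906980 * (x-2)^8 +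
        186215174988 * (x-2)^9 + 35943411616 * (x-2)^10 + 4840088384 * (x-2)^11 +
        420393984 * (x-2)^12 + 20084736 * (x-2)^13 + 344064 * (x-2)^14) /
      (2520 * x^10 * (x+1) * (6*x+1) * (6*x+7) * (4*x+1)^3 * (4*x+5)^3) := by
    unfold Aa
    field_simp
    ring
  rw [key]
  apply div_nonneg
  · have hm : (0:ℝ) ≤ x - 2 := by linarith
    have p2 := pow_nonneg hm 2
    have p3 := pow_nonneg hm 3
    have p4 := pow_nonneg hm 4
    have p5 := pow_nonneg hm 5
    have p6 := pow_nonneg hm 6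
    have p7 := pow_nonneg hm 7
    have p8 := pow_nonneg hm 8
    have p9 := pow_nonneg hm 9
    have p10 := pow_nonneg hm 10
    have p11 := pow_nonneg hm 11
    have p12 := pow_nonneg hm 12
    have p13 := pow_nonneg hm 13
    have p14 := pow_nonneg hm 14
    linarith
  · exact le_of_lt (mul_pos (mul_pos (mul_pos (mul_pos (mul_pos
      (mul_pos (by norm_num : (0:ℝ) < 2520) (pow_pos hx0 10)) h1) h2) h3)
      (pow_pos h4 3)) (pow_pos h5 3))

lemma cert2 {x : ℝ} (hx : 2 ≤ x) :
    (1/x - (1/x)^2/2 + (1/x)^3/3 - (1/x)^4/4 + (1/x)^5/5 - (1/x)^6/6 + (1/x)^7/7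
        - (1/x)^8/8 + (1/x)^9/9 - (1/x)^10/10 + (1/x)^11/11) - 1/(x+1)
      < 2 * Aa x * Aa (x + 1) := by
  have hx0 : (0:ℝ) < x := by linarith
  have h1 : (0:ℝ) < x + 1 := by linarith
  have h2 : (0:ℝ) < 6*x+1 := by linarith
  have h3 : (0:ℝ) < 6*x+7 := by linarith
  have h4 : (0:ℝ) < 4*x+1 := by linarith
  have h5 : (0:ℝ) < 4*x+5 := by linarith
  rw [← sub_pos]
  have key : 2 * Aa x * Aa (x + 1) -
      ((1/x - (1/x)^2/2 + (1/x)^3/3 - (1/x)^4/4 + (1/x)^5/5 - (1/x)^6/6 + (1/x)^7/7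
        - (1/x)^8/8 + (1/x)^9/9 - (1/x)^10/10 + (1/x)^11/11) - 1/(x+1)) =
      (95802232846776 + 777254372655368 * (x-2) + 2851532573884958 * (x-2)^2 +
        6398864590122827 * (x-2)^3 + 9907539699236715 * (x-2)^4 +
        11259418284143040 * (x-2)^5 + 9727406242107348 * (x-2)^6 +
        6519643256459310 * (x-2)^7 + 3426323007052662 * (x-2)^8 +
        1416581141593356 * (x-2)^9 + 459179140527580 * (x-2)^10 +
        115454368088224 * (x-2)^11 + 22071657247552 * (x-2)^12 +
        3100858692096 * (x-2)^13 + 301868227584 * (x-2)^14 +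
        18189287424 * (x-2)^15 + 510935040 * (x-2)^16) /
      (249480 * x^11 * (x+1) * (6*x+1) * (6*x+7) * (4*x+1)^3 * (4*x+5)^3) := by
    unfold Aa
    field_simp
    ring
  rw [key]
  apply div_pos
  · have hm : (0:ℝ) ≤ x - 2 := by linarith
    have p2 := pow_nonneg hm 2
    have p3 := pow_nonneg hm 3
    have p4 := pow_nonneg hm 4
    have p5 := pow_nonneg hm 5
    have p6 := pow_nonneg hm 6
    have p7 := pow_nonneg hm 7
    have p8 := pow_nonneg hm 8
    have p9 := pow_nonneg hm 9
    have p10 := pow_nonneg hm 10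
    have p11 := pow_nonneg hm 11
    have p12 := pow_nonneg hm 12
    have p13 := pow_nonneg hm 13
    have p14 := pow_nonneg hm 14
    have p15 := pow_nonneg hm 15
    have p16 := pow_nonneg hm 16
    linarith
  · exact mul_pos (mul_pos (mul_pos (mul_pos (mul_pos
      (mul_pos (by norm_num : (0:ℝ) < 249480) (pow_pos hx0 11)) h1) h2) h3)
      (pow_pos h4 3)) (pow_pos h5 3)

lemma Aa_pos {x : ℝ} (hx : 1 ≤ x) : 0 < Aa x := by
  have hx0 : (0:ℝ) < x := by linarith
  have h2 : (0:ℝ) < 6*x+1 := by linarith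
  have h4 : (0:ℝ) < 4*x+1 := by linarith
  have h9 : (0:ℝ) < 9*(4*x+1)^3 := by
    exact mul_pos (by norm_num) (pow_pos h4 3)
  unfold Aa
  rw [sub_pos, div_lt_div_iff₀ h9 h2]
  nlinarith [pow_pos h4 3, pow_pos hx0 3, sq_nonneg x, mul_pos hx0 hx0]

lemma aseq_sub (n : ℕ) (hn : 1 ≤ n) :
    aseq n - aseq (n+1) = Real.log (1 + 1/(n:ℝ)) - 1/((n:ℝ)+1) := by
  have hn0 : (0:ℝ) < n := by exact_mod_cast hn
  have hlog : Real.log (1 + 1/(n:ℝ)) = Real.log ((n:ℝ)+1) - Real.log n := by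
    rw [show (1:ℝ) + 1/(n:ℝ) = ((n:ℝ)+1)/n by field_simp]
    exact Real.log_div (by linarith) (by linarith)
  unfold aseq
  rw [harmonic_succ, hlog]
  push_cast
  ring

-- the key termwise inequality giving antitonicity of aseq - Aa
lemma term_lower (m : ℕ) (hm : 1 ≤ m) :
    Aa m - Aa ((m:ℝ) + 1) ≤ aseq m - aseq (m+1) := by
  rw [aseq_sub m hm]
  rcases eq_or_lt_of_le hm with h | h
  · -- m = 1
    have hm1 : (m:ℝ) = 1 := by exact_mod_cast h.symm
    rw [hm1]
    have hlog := Real.log_two_gt_d9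
    have h2 : (1:ℝ) + 1/1 = 2 := by norm_num
    rw [h2]
    unfold Aa
    norm_num
    linarith
  · -- m ≥ 2
    have hm2 : (2:ℝ) ≤ (m:ℝ) := by exact_mod_cast h
    have hc := cert1 hm2
    have hl := log_ge (1/(m:ℝ)) (by positivity)
    linarith

lemma term_upper (m : ℕ) (hm : 1 ≤ m) :
    aseq m - aseq (m+1) < 2 * Aa m * Aa ((m:ℝ) + 1) := by
  rw [aseq_sub m hm]
  rcases eq_or_lt_of_le hm with h | h
  · have hm1 : (m:ℝ) = 1 := by exact_mod_cast h.symm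
    rw [hm1]
    have hlog := Real.log_two_lt_d9
    have h2 : (1:ℝ) + 1/1 = 2 := by norm_num
    rw [h2]
    unfold Aa
    norm_num
    linarith
  · have hm2 : (2:ℝ) ≤ (m:ℝ) := by exact_mod_cast h
    have hc := cert2 hm2
    have hl := log_le (1/(m:ℝ)) (by positivity)
    linarith

lemma tendsto_aseq : Tendsto aseq atTop (𝓝 0) := by
  have h := Real.tendsto_harmonic_sub_log.sub_const Real.eulerMascheroniConstant
  rw [sub_self] at h
  exact h

lemma tendsto_Aa : Tendsto (fun n : ℕ => Aa n) atTop (𝓝 0) := by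
  have hx : Tendsto (fun n : ℕ => (n:ℝ)) atTop atTop := tendsto_natCast_atTop_atTop
  have h1 : Tendsto (fun n : ℕ => 6*(n:ℝ)+1) atTop atTop :=
    tendsto_atTop_add_const_right _ 1 (hx.const_mul_atTop (by norm_num))
  have h4 : Tendsto (fun n : ℕ => 4*(n:ℝ)+1) atTop atTop :=
    tendsto_atTop_add_const_right _ 1 (hx.const_mul_atTop (by norm_num))
  have h9 : Tendsto (fun n : ℕ => 9*(4*(n:ℝ)+1)^3) atTop atTop :=
    (((tendsto_pow_atTop (by norm_num : (3:ℕ) ≠ 0)).comp h4).const_mul_atTop (by norm_num))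
  have := (tendsto_const_nhds.div_atTop h1 (a := (3:ℝ))).sub
    (tendsto_const_nhds.div_atTop h9 (a := (8:ℝ)))
  simpa [Aa] using this

lemma aseq_ge (n : ℕ) (hn : 1 ≤ n) : Aa n ≤ aseq n := by
  set g : ℕ → ℝ := fun k => aseq (n+k) - Aa ((n+k : ℕ) : ℝ) with hg
  have hanti : Antitone g := by
    apply antitone_nat_of_succ_le
    intro k
    have h := term_lower (n+k) (by omega)
    simp only [hg]
    have hcast : ((n+(k+1) : ℕ) : ℝ) = ((n+k : ℕ) : ℝ) + 1 := by push_cast; ring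
    rw [hcast, show n+(k+1) = (n+k)+1 by omega]
    linarith
  have hlim : Tendsto g atTop (𝓝 0) := by
    have h := (tendsto_aseq.sub tendsto_Aa).comp (tendsto_add_atTop_nat n)
    rw [sub_self] at h
    apply h.congr
    intro k
    simp only [Function.comp, hg]
    rw [add_comm k n]
  have h0 := hanti.le_of_tendsto hlim 0
  simpa [hg] using h0

lemma main_step (n : ℕ) (hn : 1 ≤ n) :
    1 / ((harmonic (n+1) : ℝ) - Real.log ((n+1 : ℕ) : ℝ) - Real.eulerMascheroniConstant) - 2 * ((n+1 : ℕ) : ℝ)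
      < 1 / ((harmonic n : ℝ) - Real.log n - Real.eulerMascheroniConstant) - 2 * n := by
  have hA : 0 < Aa n := Aa_pos (by exact_mod_cast hn)
  have hA1 : 0 < Aa ((n:ℝ)+1) := Aa_pos (by
    have : (1:ℝ) ≤ n := by exact_mod_cast hn
    linarith)
  have hga : Aa n ≤ aseq n := aseq_ge n hn
  have hga1 : Aa ((n:ℝ)+1) ≤ aseq (n+1) := by
    have := aseq_ge (n+1) (by omega)
    have hcast : ((n+1 : ℕ) : ℝ) = (n:ℝ) + 1 := by push_cast; ring
    rwa [hcast] at this
  have hpos : 0 < aseq n := lt_of_lt_of_le hA hga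
  have hpos1 : 0 < aseq (n+1) := lt_of_lt_of_le hA1 hga1
  have hstep : aseq n - aseq (n+1) < 2 * aseq n * aseq (n+1) := by
    have h1 := term_upper n hn
    have h2 : 2 * Aa n * Aa ((n:ℝ)+1) ≤ 2 * aseq n * aseq (n+1) := by
      have := mul_le_mul hga hga1 (le_of_lt hA1) (le_of_lt hpos)
      nlinarith
    linarith
  have key : 1 / aseq (n+1) - 1 / aseq n < 2 := by
    rw [div_sub_div _ _ (ne_of_gt hpos1) (ne_of_gt hpos), div_lt_iff₀ (mul_pos hpos1 hpos)]
    nlinarith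
  have e1 : aseq (n+1) = (harmonic (n+1) : ℝ) - Real.log ((n+1 : ℕ) : ℝ) - Real.eulerMascheroniConstant := rfl
  have e0 : aseq n = (harmonic n : ℝ) - Real.log n - Real.eulerMascheroniConstant := rfl
  rw [← e1, ← e0]
  push_cast
  linarith

theorem f_strictAnti :
    StrictAntiOn
      (fun n : ℕ =>
        1 / ((harmonic n : ℝ) - Real.log n - Real.eulerMascheroniConstant) - 2 * n)
      (Set.Ici 1) := by
  intro m hm n hn hmn
  simp only [Set.mem_Ici] at hm hn
  clear hn
  induction n with
  | zero => omega
  | succ p ih =>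
    rcases Nat.lt_succ_iff_lt_or_eq.mp hmn with h | h
    · exact lt_trans (main_step p (by omega)) (ih h)
    · subst h
      exact main_step m hm
end

section
/- For every natural number n ≥ 1, let λ_n := 1/(H_n − ln(√(n(n+1))) − γ) − 6n(n+1). Then λ_n converges to 6/5 as n → ∞. -/
open Real Filter Set

private lemma hasDeriv_aux (x : ℝ) (h1 : -1 < x) (h2 : x < 1) :
    HasDerivAt (fun y : ℝ => Real.log (1 + y) - Real.log (1 - y))
      (1/(1+x) + 1/(1-x)) x := by
  have hx1 : (0:ℝ) < 1 + x := by linarith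
  have hx2 : (0:ℝ) < 1 - x := by linarith
  have l1 : HasDerivAt (fun y : ℝ => Real.log (1 + y)) (1/(1+x)) x := by
    simpa using (((hasDerivAt_id x).const_add 1)).log hx1.ne'
  have l2 : HasDerivAt (fun y : ℝ => Real.log (1 - y)) (-1/(1-x)) x := by
    simpa [sub_eq_add_neg] using (((hasDerivAt_id x).neg.const_add 1)).log hx2.ne'
  have h := l1.sub l2
  convert h using 1 <;> try rfl
  ring

private lemma hasDeriv_poly (c1 c3 c5 c7 c9 : ℝ) (x : ℝ) :
    HasDerivAt (fun y : ℝ => c1*y + c3*y^3 + c5*y^5 + c7*y^7 + c9*y^9)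
      (c1 + 3*c3*x^2 + 5*c5*x^4 + 7*c7*x^6 + 9*c9*x^8) x := by
  have h1 := (hasDerivAt_id x).const_mul c1
  have h3 := (hasDerivAt_pow 3 x).const_mul c3
  have h5 := (hasDerivAt_pow 5 x).const_mul c5
  have h7 := (hasDerivAt_pow 7 x).const_mul c7
  have h9 := (hasDerivAt_pow 9 x).const_mul c9
  have h := (((h1.add h3).add h5).add h7).add h9
  convert h using 1 <;> try rfl
  push_cast; ring

private lemma log_bound_low {x : ℝ} (hx0 : 0 ≤ x) (hx : x ≤ 1/2) :
    2*x + (2/3)*x^3 + (2/5)*x^5 + (2/7)*x^7 ≤ Real.log (1+x) - Real.log (1-x) := by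
  set F : ℝ → ℝ := fun y => (Real.log (1+y) - Real.log (1-y)) -
    (2*y + (2/3)*y^3 + (2/5)*y^5 + (2/7)*y^7 + 0*y^9) with hF
  have hd : ∀ y ∈ Icc (0:ℝ) (1/2), HasDerivAt F
      ((1/(1+y) + 1/(1-y)) - (2 + 3*(2/3)*y^2 + 5*(2/5)*y^4 + 7*(2/7)*y^6 + 9*0*y^8)) y := by
    intro y hy
    exact (hasDeriv_aux y (by linarith [hy.1]) (by linarith [hy.2])).sub
      (hasDeriv_poly 2 (2/3) (2/5) (2/7) 0 y)
  have hmono : MonotoneOn F (Icc (0:ℝ) (1/2)) := by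
    apply monotoneOn_of_deriv_nonneg (convex_Icc _ _)
    · exact fun y hy => (hd y hy).continuousAt.continuousWithinAt
    · intro y hy
      rw [interior_Icc] at hy
      exact (hd y (Ioo_subset_Icc_self hy)).differentiableAt.differentiableWithinAt
    · intro y hy
      rw [interior_Icc] at hy
      rw [(hd y (Ioo_subset_Icc_self hy)).deriv]
      have h1 : (0:ℝ) < 1 + y := by linarith [hy.1]
      have h2 : (0:ℝ) < 1 - y := by linarith [hy.2]
      have key : (1/(1+y) + 1/(1-y)) - (2 + 3*(2/3)*y^2 + 5*(2/5)*y^4 + 7*(2/7)*y^6 + 9*0*y^8)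
          = 2*y^8 / ((1+y)*(1-y)) := by
        field_simp
        ring
      rw [key]
      positivity
  have h0 : F 0 = 0 := by simp [hF]
  have := hmono (left_mem_Icc.2 (by norm_num)) ⟨hx0, hx⟩ hx0
  rw [h0] at this
  simp only [hF] at this
  linarith

private lemma log_bound_high {x : ℝ} (hx0 : 0 ≤ x) (hx : x ≤ 1/2) :
    Real.log (1+x) - Real.log (1-x) ≤ 2*x + (2/3)*x^3 + (2/5)*x^5 + (2/7)*x^7 + (1/3)*x^9 := by
  set F : ℝ → ℝ := fun y => (2*y + (2/3)*y^3 + (2/5)*y^5 + (2/7)*y^7 + (1/3)*y^9) -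
    (Real.log (1+y) - Real.log (1-y)) with hF
  have hd : ∀ y ∈ Icc (0:ℝ) (1/2), HasDerivAt F
      ((2 + 3*(2/3)*y^2 + 5*(2/5)*y^4 + 7*(2/7)*y^6 + 9*(1/3)*y^8) - (1/(1+y) + 1/(1-y))) y := by
    intro y hy
    exact (hasDeriv_poly 2 (2/3) (2/5) (2/7) (1/3) y).sub
      (hasDeriv_aux y (by linarith [hy.1]) (by linarith [hy.2]))
  have hmono : MonotoneOn F (Icc (0:ℝ) (1/2)) := by
    apply monotoneOn_of_deriv_nonneg (convex_Icc _ _)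
    · exact fun y hy => (hd y hy).continuousAt.continuousWithinAt
    · intro y hy
      rw [interior_Icc] at hy
      exact (hd y (Ioo_subset_Icc_self hy)).differentiableAt.differentiableWithinAt
    · intro y hy
      rw [interior_Icc] at hy
      rw [(hd y (Ioo_subset_Icc_self hy)).deriv]
      have h1 : (0:ℝ) < 1 + y := by linarith [hy.1]
      have h2 : (0:ℝ) < 1 - y := by linarith [hy.2]
      rw [sub_nonneg, div_add_div _ _ h1.ne' h2.ne', div_le_iff₀ (by positivity)]
      nlinarith [mul_nonneg (pow_nonneg hy.1.le 8)
        (show (0:ℝ) ≤ 1 - 3*y^2 by nlinarith [hy.2.le, hy.1.le])]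
  have h0 : F 0 = 0 := by simp [hF]
  have := hmono (left_mem_Icc.2 (by norm_num)) ⟨hx0, hx⟩ hx0
  rw [h0] at this
  simp only [hF] at this
  linarith

private noncomputable def Dd (n : ℕ) : ℝ :=
  (harmonic n : ℝ) - Real.log (Real.sqrt (n * (n + 1))) - Real.eulerMascheroniConstant

private noncomputable def gg (n : ℕ) : ℝ := 1 / (6*(n:ℝ)*((n:ℝ)+1) + 6/5)

private lemma step_eq (n : ℕ) (hn : 1 ≤ n) :
    Dd n - Dd (n+1) =
      (1/2) * (Real.log (1 + 1/((n:ℝ)+1)) - Real.log (1 - 1/((n:ℝ)+1))) - 1/((n:ℝ)+1) := by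
  have hn' : (1:ℝ) ≤ (n:ℝ) := by exact_mod_cast hn
  have h0 : (0:ℝ) < (n:ℝ) := by linarith
  have h1 : (0:ℝ) < (n:ℝ)+1 := by linarith
  have h2 : (0:ℝ) < (n:ℝ)+2 := by linarith
  have e1 : Real.log (Real.sqrt ((n:ℝ) * ((n:ℝ)+1))) =
      (Real.log (n:ℝ) + Real.log ((n:ℝ)+1)) / 2 := by
    rw [Real.log_sqrt (by positivity), Real.log_mul h0.ne' h1.ne']
  have e2 : Real.log (Real.sqrt (((n:ℕ)+1:ℕ) * (((n:ℕ)+1:ℕ) + 1) : ℝ)) =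
      (Real.log ((n:ℝ)+1) + Real.log ((n:ℝ)+2)) / 2 := by
    push_cast
    rw [Real.log_sqrt (by positivity), Real.log_mul h1.ne' (by linarith)]
    ring_nf
  have hh : ((harmonic (n+1) : ℚ) : ℝ) = (harmonic n : ℝ) + 1/((n:ℝ)+1) := by
    rw [harmonic_succ]; push_cast; ring
  have l1 : Real.log (1 + 1/((n:ℝ)+1)) = Real.log ((n:ℝ)+2) - Real.log ((n:ℝ)+1) := by
    rw [show (1 + 1/((n:ℝ)+1)) = ((n:ℝ)+2)/((n:ℝ)+1) by rw [eq_div_iff h1.ne']; field_simp; ring,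
      Real.log_div h2.ne' h1.ne']
  have l2 : Real.log (1 - 1/((n:ℝ)+1)) = Real.log (n:ℝ) - Real.log ((n:ℝ)+1) := by
    rw [show (1 - 1/((n:ℝ)+1)) = (n:ℝ)/((n:ℝ)+1) by rw [eq_div_iff h1.ne']; field_simp; ring,
      Real.log_div h0.ne' h1.ne']
  simp only [Dd]
  push_cast
  push_cast at e2 hh
  rw [e1, e2, hh, l1, l2]
  ring

private lemma poly1 (t : ℝ) (ht : 1 ≤ t) :
    1/(6*t*(t+1)+6/5) - 1/(6*(t+1)*(t+2)+6/5) ≤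
      (1/3)*(1/(t+1))^3 + (1/5)*(1/(t+1))^5 + (1/7)*(1/(t+1))^7 := by
  have h0 : (0:ℝ) < t := by linarith
  have hA : (0:ℝ) < 6*t*(t+1)+6/5 := by nlinarith
  have hB : (0:ℝ) < 6*(t+1)*(t+2)+6/5 := by nlinarith
  have hm : (0:ℝ) < t+1 := by linarith
  rw [← sub_nonneg]
  have h : (1/3)*(1/(t+1))^3 + (1/5)*(1/(t+1))^5 + (1/7)*(1/(t+1))^7 -
      (1/(6*t*(t+1)+6/5) - 1/(6*(t+1)*(t+2)+6/5)) =
      (684/5*t^4 + 2736/5*t^3 + 13176/25*t^2 - 1008/25*t - 3384/25) /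
        (105*(t+1)^7 * (6*t*(t+1)+6/5) * (6*(t+1)*(t+2)+6/5)) := by
    field_simp
    ring
  rw [h]
  apply div_nonneg _ (by positivity)
  nlinarith [pow_nonneg (sub_nonneg.2 ht) 2, pow_nonneg (sub_nonneg.2 ht) 3,
    pow_nonneg (sub_nonneg.2 ht) 4]

private lemma poly2 (t : ℝ) (ht : 1 ≤ t) :
    (1/3)*(1/(t+1))^3 + (1/5)*(1/(t+1))^5 + (1/7)*(1/(t+1))^7 + (1/6)*(1/(t+1))^9 ≤
      (1/(6*t*(t+1)+6/5) - 1/(6*(t+1)*(t+2)+6/5)) + (1/30)*(1/t^6 - 1/(t+1)^6) := by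
  have h0 : (0:ℝ) < t := by linarith
  have hA : (0:ℝ) < 6*t*(t+1)+6/5 := by nlinarith
  have hB : (0:ℝ) < 6*(t+1)*(t+2)+6/5 := by nlinarith
  have hm : (0:ℝ) < t+1 := by linarith
  rw [← sub_nonneg]
  have h : (1/(6*t*(t+1)+6/5) - 1/(6*(t+1)*(t+2)+6/5)) + (1/30)*(1/t^6 - 1/(t+1)^6) -
      ((1/3)*(1/(t+1))^3 + (1/5)*(1/(t+1))^5 + (1/7)*(1/(t+1))^7 + (1/6)*(1/(t+1))^9) =
      (2772/25 + 42588/25*t + 292572/25*t^2 + 1199268/25*t^3 + 3288852/25*t^4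
        + 6393492/25*t^5 + 9075744/25*t^6 + 9473868/25*t^7 + 1441152/5*t^8
        + 3909852/25*t^9 + 1439208/25*t^10 + 63612/5*t^11 + 6192/5*t^12) /
        (210 * t^6 * (t+1)^9 * (6*t*(t+1)+6/5) * (6*(t+1)*(t+2)+6/5)) := by
    field_simp
    ring
  rw [h]
  positivity

private lemma poly3 (t : ℝ) (ht : 1 ≤ t) :
    6*t*(t+1) + 6/5 - 7/t^2 ≤ 1/(1/(6*t*(t+1)+6/5) + 1/(30*t^6)) := by
  have h0 : (0:ℝ) < t := by linarith
  have hA : (0:ℝ) < 6*t*(t+1)+6/5 := by nlinarith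
  have hd : (0:ℝ) < 1/(6*t*(t+1)+6/5) + 1/(30*t^6) := by positivity
  rw [le_div_iff₀ hd]
  have expand : 1 - (6*t*(t+1) + 6/5 - 7/t^2) * (1/(6*t*(t+1)+6/5) + 1/(30*t^6)) =
      (42/5 + 42*t + 1014/25*t^2 - 72/5*t^3 - 252/5*t^4 - 72*t^5 + 174*t^6) /
        (30 * t^8 * (6*t*(t+1)+6/5)) := by
    field_simp
    ring
  have hnum : (0:ℝ) ≤ 42/5 + 42*t + 1014/25*t^2 - 72/5*t^3 - 252/5*t^4 - 72*t^5 + 174*t^6 := by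
    nlinarith [pow_nonneg (sub_nonneg.2 ht) 2, pow_nonneg (sub_nonneg.2 ht) 3,
      pow_nonneg (sub_nonneg.2 ht) 4, pow_nonneg (sub_nonneg.2 ht) 5,
      pow_nonneg (sub_nonneg.2 ht) 6]
  nlinarith [div_nonneg hnum (by positivity : (0:ℝ) ≤ 30 * t^8 * (6*t*(t+1)+6/5))]

private lemma step_low (n : ℕ) (hn : 1 ≤ n) : gg n - gg (n+1) ≤ Dd n - Dd (n+1) := by
  have hn' : (1:ℝ) ≤ (n:ℝ) := by exact_mod_cast hn
  set t : ℝ := (n:ℝ) with hT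
  have h1 : (0:ℝ) < t + 1 := by linarith
  have hx0 : (0:ℝ) ≤ 1/(t+1) := by positivity
  have hx : 1/(t+1) ≤ 1/2 := by rw [div_le_div_iff₀ h1 (by norm_num)]; linarith
  have hlog := log_bound_low hx0 hx
  have heq := step_eq n hn
  have hgg : gg n - gg (n+1) = 1/(6*t*(t+1)+6/5) - 1/(6*(t+1)*(t+2)+6/5) := by
    simp only [gg]; push_cast; ring_nf; rfl
  have hp := poly1 t hn'
  rw [hgg, heq]
  linarith

private lemma step_high (n : ℕ) (hn : 1 ≤ n) :
    Dd n - Dd (n+1) ≤ (gg n - gg (n+1)) + (1/30)*(1/(n:ℝ)^6 - 1/((n:ℝ)+1)^6) := by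
  have hn' : (1:ℝ) ≤ (n:ℝ) := by exact_mod_cast hn
  set t : ℝ := (n:ℝ) with hT
  have h1 : (0:ℝ) < t + 1 := by linarith
  have hx0 : (0:ℝ) ≤ 1/(t+1) := by positivity
  have hx : 1/(t+1) ≤ 1/2 := by rw [div_le_div_iff₀ h1 (by norm_num)]; linarith
  have hlog := log_bound_high hx0 hx
  have heq := step_eq n hn
  have hgg : gg n - gg (n+1) = 1/(6*t*(t+1)+6/5) - 1/(6*(t+1)*(t+2)+6/5) := by
    simp only [gg]; push_cast; ring_nf; rfl
  have hp := poly2 t hn'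
  rw [hgg, heq]
  linarith

private lemma tail_nonneg (a : ℕ → ℝ) (ha : Filter.Tendsto a Filter.atTop (nhds 0))
    (hstep : ∀ m, 1 ≤ m → a (m+1) ≤ a m) : ∀ n, 1 ≤ n → 0 ≤ a n := by
  intro n hn
  refine le_of_tendsto ha ?_
  filter_upwards [eventually_ge_atTop n] with m hm
  induction m, hm using Nat.le_induction with
  | base => exact le_refl _
  | succ k hk ih => exact (hstep k (le_trans hn hk)).trans ih

private lemma gg_tendsto : Filter.Tendsto gg Filter.atTop (nhds 0) := by
  have h : Filter.Tendsto (fun n : ℕ => 6*(n:ℝ)*((n:ℝ)+1) + 6/5) Filter.atTop Filter.atTop := by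
    apply Filter.tendsto_atTop_mono _ tendsto_natCast_atTop_atTop
    intro n
    have : (0:ℝ) ≤ (n:ℝ) := Nat.cast_nonneg n
    nlinarith
  exact h.inv_tendsto_atTop.congr fun n => by simp [gg, one_div]

private lemma inv6_tendsto : Filter.Tendsto (fun n : ℕ => 1/(30*(n:ℝ)^6)) Filter.atTop (nhds 0) := by
  have h : Filter.Tendsto (fun n : ℕ => 30*(n:ℝ)^6) Filter.atTop Filter.atTop := by
    apply Filter.tendsto_atTop_mono _ tendsto_natCast_atTop_atTop
    intro n
    have h0 : (0:ℝ) ≤ (n:ℝ) := Nat.cast_nonneg n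
    have : (n:ℝ) ≤ (n:ℝ)^6 := by
      rcases Nat.eq_zero_or_pos n with h|h
      · simp [h]
      · have h1 : (1:ℝ) ≤ (n:ℝ) := by exact_mod_cast h
        have h5 : (1:ℝ) ≤ (n:ℝ)^5 := one_le_pow₀ h1
        nlinarith [mul_le_mul_of_nonneg_left h5 h0]
    linarith
  exact h.inv_tendsto_atTop.congr fun n => by simp [one_div]

private lemma Dd_tendsto : Filter.Tendsto Dd Filter.atTop (nhds 0) := by
  have h1 := Real.tendsto_harmonic_sub_log
  have h2 := Real.tendsto_harmonic_sub_log_add_one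
  have h := ((h1.add h2).sub_const (2*Real.eulerMascheroniConstant)).div_const 2
  have hlim : (Real.eulerMascheroniConstant + Real.eulerMascheroniConstant
      - 2*Real.eulerMascheroniConstant) / 2 = 0 := by ring
  rw [hlim] at h
  apply h.congr'
  filter_upwards [eventually_ge_atTop 1] with n hn
  have h0 : (0:ℝ) < (n:ℝ) := by exact_mod_cast hn
  have hp1 : (0:ℝ) < (n:ℝ)+1 := by linarith
  simp only [Dd]
  rw [Real.log_sqrt (by positivity), Real.log_mul h0.ne' hp1.ne']
  ring

theorem lambda_tendsto :
    Filter.Tendsto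
      (fun n : ℕ =>
        1 / ((harmonic n : ℝ) - Real.log (Real.sqrt (n * (n + 1))) -
            Real.eulerMascheroniConstant) - 6 * n * (n + 1))
      Filter.atTop (nhds (6 / 5)) := by
  have hgpos : ∀ n : ℕ, 0 < gg n := by
    intro n
    have : (0:ℝ) ≤ (n:ℝ) := Nat.cast_nonneg n
    simp only [gg]
    positivity
  have hlow : ∀ n, 1 ≤ n → gg n ≤ Dd n := by
    have := tail_nonneg (fun n => Dd n - gg n)
      (by simpa using Dd_tendsto.sub gg_tendsto)
      (fun m hm => by have := step_low m hm; linarith)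
    intro n hn; have := this n hn; simpa [sub_nonneg] using this
  have hhigh : ∀ n, 1 ≤ n → Dd n ≤ gg n + 1/(30*(n:ℝ)^6) := by
    have := tail_nonneg (fun n => gg n + 1/(30*(n:ℝ)^6) - Dd n)
      (by
        have := (gg_tendsto.add inv6_tendsto).sub Dd_tendsto
        simpa using this)
      (fun m hm => by
        have hs := step_high m hm
        have hc : (((m+1:ℕ)):ℝ) = (m:ℝ)+1 := by push_cast; ring
        have key : ∀ x : ℝ, 1/(30*x) = 1/30 * (1/x) := fun x => by
          rw [one_div, one_div, one_div, mul_inv]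
        simp only [hc, key]
        linarith)
    intro n hn; have := this n hn; linarith
  apply tendsto_of_tendsto_of_tendsto_of_le_of_le'
      (g := fun n : ℕ => 6/5 - 7/(n:ℝ)^2) (h := fun _ : ℕ => (6:ℝ)/5)
  · have hsq : Filter.Tendsto (fun n : ℕ => (n:ℝ)^2) Filter.atTop Filter.atTop := by
      apply Filter.tendsto_atTop_mono _ tendsto_natCast_atTop_atTop
      intro n
      have h0 : (0:ℝ) ≤ (n:ℝ) := Nat.cast_nonneg n
      rcases Nat.eq_zero_or_pos n with h|h
      · simp [h]
      · have h1 : (1:ℝ) ≤ (n:ℝ) := by exact_mod_cast h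
        nlinarith
    have h7 : Filter.Tendsto (fun n : ℕ => 7/(n:ℝ)^2) Filter.atTop (nhds 0) := by
      have h := hsq.inv_tendsto_atTop
      have h2 := h.const_mul (7:ℝ)
      rw [mul_zero] at h2
      exact h2.congr fun n => by simp [div_eq_mul_inv]
    simpa using (tendsto_const_nhds (x := (6:ℝ)/5)).sub h7
  · exact tendsto_const_nhds
  · filter_upwards [eventually_ge_atTop 1] with n hn
    have hn' : (1:ℝ) ≤ (n:ℝ) := by exact_mod_cast hn
    have hDpos : 0 < Dd n := lt_of_lt_of_le (hgpos n) (hlow n hn)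
    have hDle := hhigh n hn
    have hn0 : (0:ℝ) < (n:ℝ) := by exact_mod_cast hn
    have hup : 0 < gg n + 1/(30*(n:ℝ)^6) :=
      add_pos (hgpos n) (by positivity)
    have hinv : 1/(gg n + 1/(30*(n:ℝ)^6)) ≤ 1/Dd n :=
      one_div_le_one_div_of_le hDpos hDle
    have h3 := poly3 (n:ℝ) hn'
    have hgge : gg n = 1/(6*(n:ℝ)*((n:ℝ)+1)+6/5) := rfl
    rw [← hgge] at h3
    have hfinal : 6*(n:ℝ)*((n:ℝ)+1) + 6/5 - 7/(n:ℝ)^2 ≤ 1/Dd n := le_trans h3 hinv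
    show 6/5 - 7/(n:ℝ)^2 ≤ 1/Dd n - 6*(n:ℝ)*((n:ℝ)+1)
    linarith
  · filter_upwards [eventually_ge_atTop 1] with n hn
    have hDpos : 0 < Dd n := lt_of_lt_of_le (hgpos n) (hlow n hn)
    have hinv : 1/Dd n ≤ 1/gg n := one_div_le_one_div_of_le (hgpos n) (hlow n hn)
    have : 1/gg n = 6*(n:ℝ)*((n:ℝ)+1)+6/5 := by rw [gg, one_div_one_div]
    rw [this] at hinv
    show 1/Dd n - 6*(n:ℝ)*((n:ℝ)+1) ≤ 6/5
    linarith
end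

section
/- For every real x > 0 there exists θ_x with 0 < θ_x < 1 such that Ψ(x+1) = ln x + 1/(2x) − 1/(12x^2) + 1/(120x^4) − 1/(252x^6) + θ_x/(240x^8), where Ψ is the digamma function. -/
open Real

/-- The digamma function `Ψ(x) = Γ'(x)/Γ(x) = (log ∘ Γ)'(x)`. -/
noncomputable def digamma (x : ℝ) : ℝ := deriv (fun y : ℝ => Real.log (Real.Gamma y)) x

open Set Filter Topology



/-- Lower bound for `log ((1+v)/(1-v))` on `(0,1)`. -/
lemma logb_lower {v : ℝ} (h0 : 0 < v) (h1 : v < 1) :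
    2*(v + v^3/3 + v^5/5 + v^7/7 + v^9/9 + v^11/11) < Real.log (1+v) - Real.log (1-v) := by
  set φ : ℝ → ℝ := fun y => Real.log (1+y) - Real.log (1-y)
      - 2*(y + y^3/3 + y^5/5 + y^7/7 + y^9/9 + y^11/11) with hφ
  have key : StrictMonoOn φ (Set.Ico (0:ℝ) 1) := by
    apply strictMonoOn_of_deriv_pos (convex_Ico 0 1)
    · apply ContinuousOn.sub
      apply ContinuousOn.sub
      · exact ContinuousOn.log (by fun_prop)
          (fun z hz => by have := hz.1; intro h; nlinarith)
      · exact ContinuousOn.log (by fun_prop)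
          (fun z hz => by have := hz.2; intro h; nlinarith)
      · fun_prop
    · intro y hy
      rw [interior_Ico] at hy
      obtain ⟨hy0, hy1⟩ := hy
      have d1 : HasDerivAt (fun z : ℝ => Real.log (1+z)) (1/(1+y)) y := by
        simpa using (((hasDerivAt_id y).const_add 1).log
          (by simp only [id_eq]; intro h; nlinarith))
      have d2 : HasDerivAt (fun z : ℝ => Real.log (1-z)) (-1/(1-y)) y := by
        simpa using (((hasDerivAt_id y).const_sub 1).log
          (by simp only [id_eq]; intro h; nlinarith))
      have d3 : HasDerivAt (fun z : ℝ => 2*(z + z^3/3 + z^5/5 + z^7/7 + z^9/9 + z^11/11))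
          (2*(1 + (3:ℕ)*y^2/3 + (5:ℕ)*y^4/5 + (7:ℕ)*y^6/7 + (9:ℕ)*y^8/9 + (11:ℕ)*y^10/11)) y := by
        exact ((((((hasDerivAt_id y).add ((hasDerivAt_pow 3 y).div_const 3)).add
          ((hasDerivAt_pow 5 y).div_const 5)).add
          ((hasDerivAt_pow 7 y).div_const 7)).add
          ((hasDerivAt_pow 9 y).div_const 9)).add
          ((hasDerivAt_pow 11 y).div_const 11)).const_mul 2
      have hd : HasDerivAt φ (1/(1+y) - (-1/(1-y))
          - 2*(1 + (3:ℕ)*y^2/3 + (5:ℕ)*y^4/5 + (7:ℕ)*y^6/7 + (9:ℕ)*y^8/9 + (11:ℕ)*y^10/11)) y :=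
        (d1.sub d2).sub d3
      rw [hd.deriv]
      have heq : 1/(1+y) - (-1/(1-y))
          - 2*(1 + (3:ℕ)*y^2/3 + (5:ℕ)*y^4/5 + (7:ℕ)*y^6/7 + (9:ℕ)*y^8/9 + (11:ℕ)*y^10/11)
          = 2*y^12/((1+y)*(1-y)) := by
        have hn1 : (1:ℝ)+y ≠ 0 := by intro h; nlinarith
        have hn2 : (1:ℝ)-y ≠ 0 := by intro h; nlinarith
        push_cast
        field_simp
        ring
      rw [heq]
      exact div_pos (by positivity) (mul_pos (by linarith) (by linarith))
  have h := key (left_mem_Ico.mpr one_pos) ⟨h0.le, h1⟩ h0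
  have hz : φ 0 = 0 := by simp [hφ]
  rw [hz] at h
  simp only [hφ] at h
  linarith

/-- Upper bound for `log ((1+v)/(1-v))` on `(0,1)`. -/
lemma logb_upper {v : ℝ} (h0 : 0 < v) (h1 : v < 1) :
    Real.log (1+v) - Real.log (1-v) <
      2*(v + v^3/3 + v^5/5 + v^7/7 + v^9/9 + v^11/11) + (2/13)*v^13/((1+v)*(1-v)) := by
  set φ : ℝ → ℝ := fun y => 2*(y + y^3/3 + y^5/5 + y^7/7 + y^9/9 + y^11/11)
      + (2/13)*y^13/((1+y)*(1-y)) - (Real.log (1+y) - Real.log (1-y)) with hφ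
  have key : StrictMonoOn φ (Set.Ico (0:ℝ) 1) := by
    apply strictMonoOn_of_deriv_pos (convex_Ico 0 1)
    · apply ContinuousOn.sub
      · apply ContinuousOn.add
        · fun_prop
        · apply ContinuousOn.div
          · fun_prop
          · fun_prop
          · intro y hy; obtain ⟨a, b⟩ := hy; nlinarith
      · apply ContinuousOn.sub
        · exact ContinuousOn.log (by fun_prop)
            (fun z hz => by have := hz.1; intro h; nlinarith)
        · exact ContinuousOn.log (by fun_prop)
            (fun z hz => by have := hz.2; intro h; nlinarith)
    · intro y hy
      rw [interior_Ico] at hy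
      obtain ⟨hy0, hy1⟩ := hy
      have d1 : HasDerivAt (fun z : ℝ => Real.log (1+z)) (1/(1+y)) y := by
        simpa using (((hasDerivAt_id y).const_add 1).log
          (by simp only [id_eq]; intro h; nlinarith))
      have d2 : HasDerivAt (fun z : ℝ => Real.log (1-z)) (-1/(1-y)) y := by
        simpa using (((hasDerivAt_id y).const_sub 1).log
          (by simp only [id_eq]; intro h; nlinarith))
      have d3 : HasDerivAt (fun z : ℝ => 2*(z + z^3/3 + z^5/5 + z^7/7 + z^9/9 + z^11/11))
          (2*(1 + (3:ℕ)*y^2/3 + (5:ℕ)*y^4/5 + (7:ℕ)*y^6/7 + (9:ℕ)*y^8/9 + (11:ℕ)*y^10/11)) y := by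
        exact ((((((hasDerivAt_id y).add ((hasDerivAt_pow 3 y).div_const 3)).add
          ((hasDerivAt_pow 5 y).div_const 5)).add
          ((hasDerivAt_pow 7 y).div_const 7)).add
          ((hasDerivAt_pow 9 y).div_const 9)).add
          ((hasDerivAt_pow 11 y).div_const 11)).const_mul 2
      have dden : HasDerivAt (fun z : ℝ => (1+z)*(1-z)) (1*(1-y) + (1+y)*(-1)) y := by
        exact ((hasDerivAt_id y).const_add 1).mul ((hasDerivAt_id y).const_sub 1)
      have d4 : HasDerivAt (fun z : ℝ => (2/13)*z^13/((1+z)*(1-z)))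
          (((2/13)*((13:ℕ)*y^12)*((1+y)*(1-y)) - (2/13)*y^13*(1*(1-y) + (1+y)*(-1)))
            / ((1+y)*(1-y))^2) y := by
        have hne : (1+y)*(1-y) ≠ 0 := by nlinarith
        exact (((hasDerivAt_pow 13 y).const_mul (2/13)).div dden hne)
      have hd : HasDerivAt φ
          ((2*(1 + (3:ℕ)*y^2/3 + (5:ℕ)*y^4/5 + (7:ℕ)*y^6/7 + (9:ℕ)*y^8/9 + (11:ℕ)*y^10/11)
            + ((2/13)*((13:ℕ)*y^12)*((1+y)*(1-y)) - (2/13)*y^13*(1*(1-y) + (1+y)*(-1)))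
              / ((1+y)*(1-y))^2)
            - (1/(1+y) - (-1/(1-y)))) y := by
        have : HasDerivAt (fun z : ℝ => 2*(z + z^3/3 + z^5/5 + z^7/7 + z^9/9 + z^11/11)
            + (2/13)*z^13/((1+z)*(1-z))) _ y := d3.add d4
        exact this.sub (d1.sub d2)
      rw [hd.deriv]
      have heq : (2*(1 + (3:ℕ)*y^2/3 + (5:ℕ)*y^4/5 + (7:ℕ)*y^6/7 + (9:ℕ)*y^8/9 + (11:ℕ)*y^10/11)
            + ((2/13)*((13:ℕ)*y^12)*((1+y)*(1-y)) - (2/13)*y^13*(1*(1-y) + (1+y)*(-1)))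
              / ((1+y)*(1-y))^2)
            - (1/(1+y) - (-1/(1-y)))
          = (4/13)*y^14/((1+y)*(1-y))^2 := by
        have hn1 : (1:ℝ)+y ≠ 0 := by intro h; nlinarith
        have hn2 : (1:ℝ)-y ≠ 0 := by intro h; nlinarith
        push_cast
        field_simp
        ring
      rw [heq]
      have hden : (0:ℝ) < (1+y)*(1-y) := mul_pos (by linarith) (by linarith)
      positivity
  have h := key (left_mem_Ico.mpr one_pos) ⟨h0.le, h1⟩ h0
  have hz : φ 0 = 0 := by norm_num [hφ]
  rw [hz] at h
  simp only [hφ] at h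
  linarith




lemma hderG {x : ℝ} (hx : 0 < x) :
    DifferentiableAt ℝ (fun y : ℝ => Real.log (Real.Gamma y)) x := by
  refine (Real.differentiableAt_Gamma fun m => ?_).log (Real.Gamma_ne_zero fun m => ?_) <;>
    exact ne_of_gt (lt_of_le_of_lt (neg_nonpos.mpr (Nat.cast_nonneg m)) hx)

lemma log_gamma_rec {x : ℝ} (hx : 0 < x) :
    Real.log (Real.Gamma (x + 1)) = Real.log (Real.Gamma x) + Real.log x := by
  rw [Real.Gamma_add_one hx.ne', Real.log_mul hx.ne' (Real.Gamma_pos_of_pos hx).ne', add_comm]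

lemma digamma_rec {x : ℝ} (hx : 0 < x) : digamma (x + 1) = digamma x + 1 / x := by
  unfold digamma
  rw [← deriv_comp_add_const, one_div, ← Real.deriv_log,
    ← deriv_add (hderG hx) (Real.differentiableAt_log hx.ne')]
  apply Filter.EventuallyEq.deriv_eq
  filter_upwards [eventually_gt_nhds hx] with y hy
  exact log_gamma_rec hy

lemma log_le_digamma {x : ℝ} (hx : 0 < x) : Real.log x ≤ digamma (x + 1) := by
  have hc : ConvexOn ℝ (Ioi 0) (Real.log ∘ Real.Gamma) := Real.convexOn_log_Gamma
  have h := hc.slope_le_deriv (mem_Ioi.mpr hx) (mem_Ioi.mpr (by linarith : (0:ℝ) < x + 1))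
    (by linarith) ((hderG (by linarith)) : DifferentiableAt ℝ (Real.log ∘ Real.Gamma) (x+1))
  have hs : slope (Real.log ∘ Real.Gamma) x (x + 1) = Real.log x := by
    rw [slope_def_field, show x + 1 - x = (1:ℝ) by ring, div_one]
    simp only [Function.comp_apply]
    rw [log_gamma_rec hx]
    ring
  rw [hs] at h
  exact h.trans_eq rfl

lemma digamma_le_log {x : ℝ} (hx : 0 < x) : digamma (x + 1) ≤ Real.log (x + 1) := by
  have hc : ConvexOn ℝ (Ioi 0) (Real.log ∘ Real.Gamma) := Real.convexOn_log_Gamma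
  have h := hc.deriv_le_slope (mem_Ioi.mpr (by linarith : (0:ℝ) < x + 1))
    (mem_Ioi.mpr (by linarith : (0:ℝ) < x + 2)) (by linarith)
    ((hderG (by linarith)) : DifferentiableAt ℝ (Real.log ∘ Real.Gamma) (x+1))
  have hs : slope (Real.log ∘ Real.Gamma) (x + 1) (x + 2) = Real.log (x + 1) := by
    rw [slope_def_field, show x + 2 - (x + 1) = (1:ℝ) by ring, div_one]
    simp only [Function.comp_apply]
    rw [show x + 2 = (x + 1) + 1 by ring, log_gamma_rec (by linarith : (0:ℝ) < x + 1)]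
    ring
  rw [hs] at h
  exact h

lemma log_add_one_le {y : ℝ} (hy : 0 < y) : Real.log (y + 1) ≤ Real.log y + 1 / y := by
  have h : Real.log ((y + 1) / y) ≤ (y + 1) / y - 1 :=
    Real.log_le_sub_one_of_pos (by positivity)
  rw [Real.log_div (by positivity) hy.ne'] at h
  have : (y + 1) / y - 1 = 1 / y := by field_simp; ring
  linarith [h, this.le, this.ge]

noncomputable def Pfun (t : ℝ) : ℝ := 1/(2*t) - 1/(12*t^2) + 1/(120*t^4) - 1/(252*t^6)

noncomputable def Ffun (t : ℝ) : ℝ := Real.log t + Pfun t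

noncomputable def gfun (t : ℝ) : ℝ := 1/(240*t^8)

noncomputable def Dfun (t : ℝ) : ℝ := Ffun (t+1) - Ffun t - 1/(t+1)

noncomputable def Rfun (t : ℝ) : ℝ := digamma (t+1) - Ffun t

lemma log_change {t : ℝ} (ht : 0 < t) :
    Real.log (t+1) - Real.log t
      = Real.log (1 + 1/(2*t+1)) - Real.log (1 - 1/(2*t+1)) := by
  have h2t : (0:ℝ) < 2*t+1 := by linarith
  have h1 : 1 + 1/(2*t+1) = (2*(t+1))/(2*t+1) := by field_simp; ring
  have h2 : 1 - 1/(2*t+1) = (2*t)/(2*t+1) := by field_simp; ring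
  rw [h1, h2, Real.log_div (by positivity) h2t.ne', Real.log_div (by positivity) h2t.ne',
    Real.log_mul two_ne_zero (by positivity), Real.log_mul two_ne_zero ht.ne']
  ring

lemma Dfun_eq {t : ℝ} (ht : 0 < t) :
    Dfun t = (Real.log (1 + 1/(2*t+1)) - Real.log (1 - 1/(2*t+1)))
      - 1/(t+1) + (Pfun (t+1) - Pfun t) := by
  rw [← log_change ht]
  unfold Dfun Ffun
  ring

lemma v_mem {t : ℝ} (ht : 0 < t) : 0 < 1/(2*t+1) ∧ 1/(2*t+1) < 1 := by
  constructor
  · positivity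
  · rw [div_lt_one (by linarith)]; linarith

lemma D_pos {t : ℝ} (ht : 0 < t) : 0 < Dfun t := by
  obtain ⟨hv0, hv1⟩ := v_mem ht
  have hb := logb_lower hv0 hv1
  have key : 0 < 2*(1/(2*t+1) + (1/(2*t+1))^3/3 + (1/(2*t+1))^5/5 + (1/(2*t+1))^7/7
      + (1/(2*t+1))^9/9 + (1/(2*t+1))^11/11) - 1/(t+1) + (Pfun (t+1) - Pfun t) := by
    have heq : 2*(1/(2*t+1) + (1/(2*t+1))^3/3 + (1/(2*t+1))^5/5 + (1/(2*t+1))^7/7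
        + (1/(2*t+1))^9/9 + (1/(2*t+1))^11/11) - 1/(t+1) + (Pfun (t+1) - Pfun t)
        = ((1/252) + (1/9)*t + (3649/2520)*t^2 + (3664/315)*t^3 + (162053/2520)*t^4 + (65183/252)*t^5 + (10817357/13860)*t^6 + (6216866/3465)*t^7 + (43752383/13860)*t^8 + (9768821/2310)*t^9 + (1961405/462)*t^10 + (510976/165)*t^11 + (51200/33)*t^12 + (7168/15)*t^13 + (1024/15)*t^14)
          / (t^6 * (t+1)^6 * (2*t+1)^11) := by
      unfold Pfun
      have h1 : t ≠ 0 := ht.ne'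
      have h2 : t + 1 ≠ 0 := by positivity
      have h3 : 2*t + 1 ≠ 0 := by positivity
      field_simp
      ring
    rw [heq]
    positivity
  rw [Dfun_eq ht]
  linarith

lemma D_lt {t : ℝ} (ht : 0 < t) : Dfun t < gfun t - gfun (t+1) := by
  obtain ⟨hv0, hv1⟩ := v_mem ht
  have hb := logb_upper hv0 hv1
  have key : 0 < (gfun t - gfun (t+1))
      - ((2*(1/(2*t+1) + (1/(2*t+1))^3/3 + (1/(2*t+1))^5/5 + (1/(2*t+1))^7/7
          + (1/(2*t+1))^9/9 + (1/(2*t+1))^11/11)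
        + (2/13)*(1/(2*t+1))^13/((1 + 1/(2*t+1))*(1 - 1/(2*t+1))))
        - 1/(t+1) + (Pfun (t+1) - Pfun t)) := by
    have heq : (gfun t - gfun (t+1))
        - ((2*(1/(2*t+1) + (1/(2*t+1))^3/3 + (1/(2*t+1))^5/5 + (1/(2*t+1))^7/7
            + (1/(2*t+1))^9/9 + (1/(2*t+1))^11/11)
          + (2/13)*(1/(2*t+1))^13/((1 + 1/(2*t+1))*(1 - 1/(2*t+1))))
          - 1/(t+1) + (Pfun (t+1) - Pfun t))
        = ((1/240) + (31/240)*t + (4757/2520)*t^2 + (21769/1260)*t^3 + (69887/630)*t^4 + (55688/105)*t^5 + (68437/35)*t^6 + (7751542/1365)*t^7 + (4740035791/360360)*t^8 + (8806652929/360360)*t^9 + (6562070069/180180)*t^10 + (1949712481/45045)*t^11 + (1042933273/25740)*t^12 + (5269145113/180180)*t^13 + (235921408/15015)*t^14 + (88894976/15015)*t^15 + (15360/11)*t^16 + (5120/33)*t^17)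
          / (t^8 * (t+1)^9 * (2*t+1)^11) := by
      unfold Pfun gfun
      have h1 : t ≠ 0 := ht.ne'
      have h2 : t + 1 ≠ 0 := by positivity
      have h3 : 2*t + 1 ≠ 0 := by positivity
      have h4 : 1 + 1/(2*t+1) ≠ 0 := by positivity
      have h5 : 1 - 1/(2*t+1) ≠ 0 := by
        intro h; rw [sub_eq_zero] at h
        have := h.symm
        rw [div_eq_one_iff_eq h3] at this
        linarith
      field_simp
      ring
    rw [heq]
    positivity
  rw [Dfun_eq ht]
  linarith

lemma R_step {t : ℝ} (ht : 0 < t) : Rfun t = Dfun t + Rfun (t+1) := by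
  have h := digamma_rec (by linarith : (0:ℝ) < t + 1)
  unfold Rfun Dfun
  rw [h]
  ring

lemma R_tendsto {x : ℝ} (hx : 0 < x) :
    Filter.Tendsto (fun n : ℕ => Rfun (x + n)) Filter.atTop (nhds 0) := by
  have hpos : ∀ n : ℕ, (0:ℝ) < x + n := fun n => by positivity
  have h1 : Filter.Tendsto (fun n : ℕ => x + (n:ℝ)) Filter.atTop Filter.atTop :=
    Filter.tendsto_atTop_add_const_left _ x tendsto_natCast_atTop_atTop
  have hinv : Filter.Tendsto (fun n : ℕ => (x + (n:ℝ))⁻¹) Filter.atTop (nhds 0) :=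
    h1.inv_tendsto_atTop
  -- digamma part
  have hA : Filter.Tendsto (fun n : ℕ => digamma (x + n + 1) - Real.log (x + n))
      Filter.atTop (nhds 0) := by
    apply squeeze_zero (fun n => ?_) (fun n => ?_) hinv
    · have := log_le_digamma (hpos n); linarith
    · have h2 := digamma_le_log (hpos n)
      have h3 := log_add_one_le (hpos n)
      rw [one_div] at h3
      linarith
  -- Pfun part
  have hB : Filter.Tendsto (fun n : ℕ => Pfun (x + n)) Filter.atTop (nhds 0) := by
    have h4 : Filter.Tendsto (fun n : ℕ => 4 * (x + (n:ℝ))⁻¹) Filter.atTop (nhds 0) := by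
      simpa using hinv.const_mul (4:ℝ)
    apply squeeze_zero_norm' ?_ h4
    filter_upwards [h1.eventually_ge_atTop 1] with n hn
    have hy : (0:ℝ) < x + n := hpos n
    have hb1 : 1/(2*(x+n)) ≤ (x+n)⁻¹ := by
      rw [one_div, inv_le_inv₀ (by positivity) (by positivity)]; linarith
    have hb2 : 1/(12*(x+n)^2) ≤ (x+n)⁻¹ := by
      rw [one_div, inv_le_inv₀ (by positivity) (by positivity)]; nlinarith
    have hpow : ∀ m : ℕ, 1 ≤ m → x + (n:ℝ) ≤ (x+(n:ℝ))^m := fun m hm => by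
      calc x + (n:ℝ) = (x+(n:ℝ))^1 := (pow_one _).symm
      _ ≤ (x+(n:ℝ))^m := pow_le_pow_right₀ hn hm
    have hb3 : 1/(120*(x+n)^4) ≤ (x+n)⁻¹ := by
      rw [one_div, inv_le_inv₀ (by positivity) (by positivity)]
      nlinarith [hpow 4 (by norm_num)]
    have hb4 : 1/(252*(x+n)^6) ≤ (x+n)⁻¹ := by
      rw [one_div, inv_le_inv₀ (by positivity) (by positivity)]
      nlinarith [hpow 6 (by norm_num)]
    have hp1 : (0:ℝ) < 1/(2*(x+n)) := by positivity
    have hp2 : (0:ℝ) < 1/(12*(x+n)^2) := by positivity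
    have hp3 : (0:ℝ) < 1/(120*(x+n)^4) := by positivity
    have hp4 : (0:ℝ) < 1/(252*(x+n)^6) := by positivity
    rw [Real.norm_eq_abs, abs_le]
    unfold Pfun
    constructor <;> nlinarith
  have heq : (fun n : ℕ => Rfun (x + n))
      = fun n : ℕ => (digamma (x + n + 1) - Real.log (x + n)) - Pfun (x + n) := by
    funext n; unfold Rfun Ffun; ring
  rw [heq]
  simpa using hA.sub hB

lemma R_telescope {x : ℝ} (hx : 0 < x) (n : ℕ) :
    Rfun x = (∑ k ∈ Finset.range n, Dfun (x + k)) + Rfun (x + n) := by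
  induction n with
  | zero => simp
  | succ n ih =>
    rw [Finset.sum_range_succ]
    have hstep := R_step (t := x + n) (by positivity)
    have hc : x + (n:ℝ) + 1 = x + ((n:ℕ) + 1 : ℕ) := by push_cast; ring
    rw [hc] at hstep
    rw [ih, hstep]
    ring

lemma R_sum_tendsto {x : ℝ} (hx : 0 < x) :
    Filter.Tendsto (fun n : ℕ => ∑ k ∈ Finset.range n, Dfun (x + k))
      Filter.atTop (nhds (Rfun x)) := by
  have heq : (fun n : ℕ => ∑ k ∈ Finset.range n, Dfun (x + k))
      = fun n : ℕ => Rfun x - Rfun (x + n) := by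
    funext n
    have := R_telescope hx n
    linarith
  rw [heq]
  simpa using (tendsto_const_nhds (x := Rfun x)).sub (R_tendsto hx)

lemma R_nonneg {x : ℝ} (hx : 0 < x) : 0 ≤ Rfun x := by
  refine ge_of_tendsto' (R_sum_tendsto hx) fun n => ?_
  exact Finset.sum_nonneg fun k _ => (D_pos (by positivity : (0:ℝ) < x + k)).le

lemma R_le_g {x : ℝ} (hx : 0 < x) : Rfun x ≤ gfun x := by
  refine le_of_tendsto' (R_sum_tendsto hx) fun n => ?_
  have h1 : ∑ k ∈ Finset.range n, Dfun (x + k)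
      ≤ ∑ k ∈ Finset.range n, (gfun (x + k) - gfun (x + (k+1:ℕ))) := by
    refine Finset.sum_le_sum fun k _ => ?_
    have := D_lt (t := x + k) (by positivity)
    have hc : x + ((k:ℕ) + 1 : ℕ) = x + (k:ℝ) + 1 := by push_cast; ring
    rw [hc]
    linarith
  have h2 : ∑ k ∈ Finset.range n, (gfun (x + k) - gfun (x + (k+1:ℕ)))
      = gfun (x + (0:ℕ)) - gfun (x + n) :=
    Finset.sum_range_sub' (fun k => gfun (x + k)) n
  have h3 : gfun (x + (0:ℕ)) = gfun x := by norm_num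
  have h4 : 0 ≤ gfun (x + n) := by
    unfold gfun
    positivity
  rw [h2, h3] at h1
  linarith

theorem digamma_expansion (x : ℝ) (hx : 0 < x) :
    ∃ θ : ℝ, 0 < θ ∧ θ < 1 ∧
      digamma (x + 1) =
        Real.log x + 1 / (2 * x) - 1 / (12 * x ^ 2) + 1 / (120 * x ^ 4) -
          1 / (252 * x ^ 6) + θ / (240 * x ^ 8) := by
  have hx1 : (0:ℝ) < x + 1 := by linarith
  have hstep := R_step hx
  have hpos : 0 < Rfun x := by
    have := D_pos hx
    have := R_nonneg hx1
    linarith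
  have hlt : Rfun x < gfun x := by
    have := D_lt hx
    have := R_le_g hx1
    linarith
  have h240 : (0:ℝ) < 240 * x ^ 8 := by positivity
  refine ⟨Rfun x * (240 * x ^ 8), by positivity, ?_, ?_⟩
  · have h := mul_lt_mul_of_pos_right hlt h240
    unfold gfun at h
    rw [one_div, inv_mul_cancel₀ h240.ne'] at h
    exact h
  · have hdiv : Rfun x * (240 * x ^ 8) / (240 * x ^ 8) = Rfun x := by
      field_simp
    rw [hdiv]
    unfold Rfun Ffun Pfun
    ring
end
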